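/- arXiv:2504.07384 — 10 statements merged into one kernel-verified Lean document; each statement's English description precedes it below -/
import Mathlib

section
/- Let C_1, …, C_k be pairwise disjoint nonempty subsets of X whose union is X, with rates α_r, β_r > 0, and let Q := Σ_{r=1}^k ( α_r (K_{C_r}(A) − I) + β_r (K_{C_r}(B) − I) ), where I is the identity matrix. Then the entries of Q are: for i ≠ j, Q_{i,j} = α_r if for some r one has i(a) = 1 for all a ∈ C_r, j(a) = 0 for some a ∈ C_r, and i(a) = j(a) for all a ∉ C_r; Q_{i,j} = β_r if for some r one has i(a) = 0 for all a ∈ C_r, j(a) = 1 for some a ∈ C_r, and i(a) = j(a) for all a ∉ C_r; Q_{i,j} = 0 for all other i ≠ j; and every column of Q sums to 0, i.e. Q_{j,j} = −Σ_{i ≠ j} Q_{i,j}. (Proposition 1: entry formula for the epoch rate matrix of a convergence-divergence model.) -/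
open scoped BigOperators

/-- For a 2×2 real matrix `Y` and a subset `C ⊆ X`, `Kmat Y C` is the matrix on
configurations `i : X → Fin 2` with entries
`(∏_{a ∈ C} Y (i a) (j a)) · (∏_{a ∉ C} [i a = j a])`. -/
def Kmat {X : Type*} [Fintype X] [DecidableEq X]
    (Y : Matrix (Fin 2) (Fin 2) ℝ) (C : Finset X) :
    Matrix (X → Fin 2) (X → Fin 2) ℝ :=
  Matrix.of fun i j =>
    (∏ a ∈ C, Y (i a) (j a)) * ∏ a ∈ Cᶜ, (if i a = j a then (1 : ℝ) else 0)

lemma Aentry (x y : Fin 2) : (!![(0:ℝ),0;1,1]) x y = if x = 1 then 1 else 0 := by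
  rcases (by omega : x = 0 ∨ x = 1) with h | h <;>
    rcases (by omega : y = 0 ∨ y = 1) with h' | h' <;> subst h <;> subst h' <;> simp

lemma Bentry (x y : Fin 2) : (!![(1:ℝ),1;0,0]) x y = if x = 0 then 1 else 0 := by
  rcases (by omega : x = 0 ∨ x = 1) with h | h <;>
    rcases (by omega : y = 0 ∨ y = 1) with h' | h' <;> subst h <;> subst h' <;> simp

lemma Kval_eq {X : Type*} [Fintype X] [DecidableEq X] (Y : Matrix (Fin 2) (Fin 2) ℝ)
    (v : Fin 2) (hY : ∀ x y : Fin 2, Y x y = if x = v then 1 else 0)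
    (C : Finset X) (i j : X → Fin 2) :
    Kmat Y C i j = if (∀ a ∈ C, i a = v) ∧ (∀ a ∉ C, i a = j a) then 1 else 0 := by
  unfold Kmat
  simp only [Matrix.of_apply, hY, Finset.prod_boole]
  have hcompl : (∀ a ∈ Cᶜ, i a = j a) ↔ (∀ a ∉ C, i a = j a) := by
    simp [Finset.mem_compl]
  have key : ∀ (p q : Prop) [Decidable p] [Decidable q],
      ((if p then (1:ℝ) else 0) * (if q then 1 else 0)) = if p ∧ q then 1 else 0 := by
    intro p q _ _
    by_cases hp : p <;> by_cases hq : q <;> simp [hp, hq]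
  rw [key]
  by_cases h : (∀ a ∈ C, i a = v) ∧ (∀ a ∈ Cᶜ, i a = j a)
  · rw [if_pos h, if_pos ⟨h.1, hcompl.mp h.2⟩]
  · rw [if_neg h, if_neg (fun hc => h ⟨hc.1, hcompl.mpr hc.2⟩)]

lemma conf_iff {X : Type*} [Fintype X] [DecidableEq X] (C : Finset X) (v : Fin 2)
    (i j : X → Fin 2) :
    ((∀ a ∈ C, i a = v) ∧ (∀ a ∉ C, i a = j a)) ↔
      i = fun a => if a ∈ C then v else j a := by
  constructor
  · rintro ⟨h1, h2⟩
    funext a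
    by_cases h : a ∈ C <;> simp [h, h1 a, h2 a]
  · rintro rfl
    constructor <;> intro a ha <;> simp [ha]

/-- Proposition 1: entry formula for the epoch rate matrix of a convergence-divergence
model.  With `C₁, …, C_k` pairwise disjoint nonempty subsets of the taxon set `X`
whose union is `X`, rates `α_r, β_r > 0`, and
`Q = ∑ r, (α_r (K_{C_r}(A) − I) + β_r (K_{C_r}(B) − I))` where `A = !![0,0;1,1]` and
`B = !![1,1;0,0]`, the off-diagonal entries of `Q` are `α_r`, `β_r` or `0` as
described, and every column of `Q` sums to `0`. -/
theorem cdm_rate_matrix_entries {X : Type*} [Fintype X] [DecidableEq X] {k : ℕ}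
    (C : Fin k → Finset X)
    (hdisj : ∀ r s : Fin k, r ≠ s → Disjoint (C r) (C s))
    (hne : ∀ r : Fin k, (C r).Nonempty)
    (hunion : Finset.univ.biUnion C = (Finset.univ : Finset X))
    (α β : Fin k → ℝ) (hα : ∀ r, 0 < α r) (hβ : ∀ r, 0 < β r)
    (Q : Matrix (X → Fin 2) (X → Fin 2) ℝ)
    (hQ : Q = ∑ r : Fin k,
      (α r • (Kmat !![0,0;1,1] (C r) - 1) + β r • (Kmat !![1,1;0,0] (C r) - 1))) :
    (∀ i j : X → Fin 2, i ≠ j → ∀ r : Fin k,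
      (∀ a ∈ C r, i a = 1) → (∃ a ∈ C r, j a = 0) → (∀ a ∉ C r, i a = j a) →
      Q i j = α r) ∧
    (∀ i j : X → Fin 2, i ≠ j → ∀ r : Fin k,
      (∀ a ∈ C r, i a = 0) → (∃ a ∈ C r, j a = 1) → (∀ a ∉ C r, i a = j a) →
      Q i j = β r) ∧
    (∀ i j : X → Fin 2, i ≠ j →
      (¬ ∃ r : Fin k,
        ((∀ a ∈ C r, i a = 1) ∧ (∃ a ∈ C r, j a = 0) ∧ (∀ a ∉ C r, i a = j a)) ∨
        ((∀ a ∈ C r, i a = 0) ∧ (∃ a ∈ C r, j a = 1) ∧ (∀ a ∉ C r, i a = j a))) →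
      Q i j = 0) ∧
    (∀ j : X → Fin 2, Q j j = -∑ i ∈ Finset.univ.erase j, Q i j) := by
  have hKA := Kval_eq (X := X) !![0,0;1,1] 1 Aentry
  have hKB := Kval_eq (X := X) !![1,1;0,0] 0 Bentry
  have hQentry : ∀ i j : X → Fin 2, Q i j =
      ∑ r : Fin k,
        (α r * ((if (∀ a ∈ C r, i a = 1) ∧ (∀ a ∉ C r, i a = j a) then (1:ℝ) else 0)
            - (if i = j then 1 else 0))
        + β r * ((if (∀ a ∈ C r, i a = 0) ∧ (∀ a ∉ C r, i a = j a) then (1:ℝ) else 0)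
            - (if i = j then 1 else 0))) := by
    intro i j
    rw [hQ]
    simp only [Matrix.sum_apply, Matrix.add_apply, Matrix.smul_apply, Matrix.sub_apply,
      Matrix.one_apply, smul_eq_mul, hKA, hKB]
  refine ⟨?_, ?_, ?_, ?_⟩
  · intro i j hij r h1 ⟨a, ha, hja⟩ h3
    rw [hQentry]
    rw [Finset.sum_eq_single r]
    · have hPB : ¬ ((∀ a ∈ C r, i a = 0) ∧ (∀ a ∉ C r, i a = j a)) := by
        rintro ⟨h0, -⟩
        have := h0 a ha
        rw [h1 a ha] at this
        exact absurd this (by decide)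
      rw [if_pos ⟨h1, h3⟩, if_neg hPB, if_neg hij]
      ring
    · intro s _ hs
      have haNs : a ∉ C s := Finset.disjoint_left.mp (hdisj r s (Ne.symm hs)) ha
      have hne' : i a ≠ j a := by rw [h1 a ha, hja]; decide
      have hPA : ¬ ((∀ a ∈ C s, i a = 1) ∧ (∀ a ∉ C s, i a = j a)) := by
        rintro ⟨-, hoff⟩; exact hne' (hoff a haNs)
      have hPB : ¬ ((∀ a ∈ C s, i a = 0) ∧ (∀ a ∉ C s, i a = j a)) := by
        rintro ⟨-, hoff⟩; exact hne' (hoff a haNs)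
      rw [if_neg hPA, if_neg hPB, if_neg hij]
      ring
    · simp
  · intro i j hij r h1 ⟨a, ha, hja⟩ h3
    rw [hQentry]
    rw [Finset.sum_eq_single r]
    · have hPA : ¬ ((∀ a ∈ C r, i a = 1) ∧ (∀ a ∉ C r, i a = j a)) := by
        rintro ⟨h0, -⟩
        have := h0 a ha
        rw [h1 a ha] at this
        exact absurd this (by decide)
      rw [if_neg hPA, if_neg hij, if_pos (show (∀ a ∈ C r, i a = 0) ∧ (∀ a ∉ C r, i a = j a) from ⟨h1, h3⟩)]
      ring
    · intro s _ hs
      have haNs : a ∉ C s := Finset.disjoint_left.mp (hdisj r s (Ne.symm hs)) ha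
      have hne' : i a ≠ j a := by rw [h1 a ha, hja]; decide
      have hPA : ¬ ((∀ a ∈ C s, i a = 1) ∧ (∀ a ∉ C s, i a = j a)) := by
        rintro ⟨-, hoff⟩; exact hne' (hoff a haNs)
      have hPB : ¬ ((∀ a ∈ C s, i a = 0) ∧ (∀ a ∉ C s, i a = j a)) := by
        rintro ⟨-, hoff⟩; exact hne' (hoff a haNs)
      rw [if_neg hPA, if_neg hPB, if_neg hij]
      ring
    · simp
  · intro i j hij hnot
    rw [hQentry]
    apply Finset.sum_eq_zero
    intro r _
    obtain ⟨a, hane⟩ : ∃ a, i a ≠ j a := by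
      by_contra h
      push_neg at h
      exact hij (funext h)
    have hPA : ¬ ((∀ a ∈ C r, i a = 1) ∧ (∀ a ∉ C r, i a = j a)) := by
      rintro ⟨hall, hoff⟩
      have haC : a ∈ C r := by
        by_contra hc
        exact hane (hoff a hc)
      have hja : j a = 0 := by
        have hia := hall a haC
        rw [hia] at hane
        omega
      exact hnot ⟨r, Or.inl ⟨hall, ⟨a, haC, hja⟩, hoff⟩⟩
    have hPB : ¬ ((∀ a ∈ C r, i a = 0) ∧ (∀ a ∉ C r, i a = j a)) := by
      rintro ⟨hall, hoff⟩
      have haC : a ∈ C r := by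
        by_contra hc
        exact hane (hoff a hc)
      have hja : j a = 1 := by
        have hia := hall a haC
        rw [hia] at hane
        omega
      exact hnot ⟨r, Or.inr ⟨hall, ⟨a, haC, hja⟩, hoff⟩⟩
    rw [if_neg hPA, if_neg hPB, if_neg hij]
    ring
  · intro j
    have hsum : ∑ i : X → Fin 2, Q i j = 0 := by
      simp only [hQentry]
      rw [Finset.sum_comm]
      apply Finset.sum_eq_zero
      intro r _
      have hA : ∑ i : X → Fin 2,
          (if (∀ a ∈ C r, i a = 1) ∧ (∀ a ∉ C r, i a = j a) then (1:ℝ) else 0) = 1 := by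
        simp only [conf_iff]
        rw [Finset.sum_ite_eq' Finset.univ]
        simp
      have hB : ∑ i : X → Fin 2,
          (if (∀ a ∈ C r, i a = 0) ∧ (∀ a ∉ C r, i a = j a) then (1:ℝ) else 0) = 1 := by
        simp only [conf_iff]
        rw [Finset.sum_ite_eq' Finset.univ]
        simp
      have hδ : ∑ i : X → Fin 2, (if i = j then (1:ℝ) else 0) = 1 := by
        rw [Finset.sum_ite_eq' Finset.univ]
        simp
      rw [Finset.sum_add_distrib, ← Finset.mul_sum, ← Finset.mul_sum,
        Finset.sum_sub_distrib, Finset.sum_sub_distrib, hA, hB, hδ]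
      ring
    have h2 := Finset.add_sum_erase Finset.univ (fun i => Q i j) (Finset.mem_univ j)
    rw [hsum] at h2
    linarith
end

section
/- For every real t, the matrix exponential of t·Q^{[C]} is given by exp(t Q^{[C]}) = I + ((1 − e^{−(α+β)t})/(α+β)) · Q^{[C]}, where I is the identity matrix. (Closed form for the transition matrix of a convergence group, from the proof of Theorem 1.) -/
open scoped Classical in
/-- The convergence rate matrix `Q^{[C]}` for a convergence group `C ⊆ X` with rates
`α, β`, acting on configurations `i : X → Fin 2`. -/
noncomputable def Qconv {X : Type*} [Fintype X] [DecidableEq X]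
    (C : Finset X) (α β : ℝ) : Matrix (X → Fin 2) (X → Fin 2) ℝ :=
  Matrix.of fun i j =>
    if i = j then
      if ∀ a ∈ C, j a = 0 then -α
      else if ∀ a ∈ C, j a = 1 then -β
      else -(α + β)
    else
      if (∀ a ∈ C, i a = 1) ∧ (∃ a ∈ C, j a = 0) ∧ (∀ a ∉ C, i a = j a) then α
      else if (∀ a ∈ C, i a = 0) ∧ (∃ a ∈ C, j a = 1) ∧ (∀ a ∉ C, i a = j a) then β
      else 0

section Aux

variable {X : Type*} [Fintype X] [DecidableEq X]

open scoped Classical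

/-- Matrix of the relation "agree off `C`". -/
noncomputable def Jmat (C : Finset X) : Matrix (X → Fin 2) (X → Fin 2) ℝ :=
  Matrix.of fun i j => if ∀ a ∉ C, i a = j a then 1 else 0

/-- Diagonal indicator of "constantly `v` on `C`". -/
noncomputable def Dmat (C : Finset X) (v : Fin 2) : Matrix (X → Fin 2) (X → Fin 2) ℝ :=
  Matrix.diagonal fun i => if ∀ a ∈ C, i a = v then 1 else 0

lemma fin2_eq_zero_of_ne_one {x : Fin 2} (h : x ≠ 1) : x = 0 := by omega

lemma fin2_eq_one_of_ne_zero {x : Fin 2} (h : x ≠ 0) : x = 1 := by omega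

lemma JDJ (C : Finset X) (v : Fin 2) : Jmat C * Dmat C v * Jmat C = Jmat C := by
  ext i k
  rw [Matrix.mul_apply]
  set j0 : X → Fin 2 := fun a => if a ∈ C then v else i a with hj0
  have hsum : ∀ j, j ≠ j0 →
      (Jmat C * Dmat C v) i j * Jmat C j k = 0 := by
    intro j hj
    by_cases h1 : (∀ a ∉ C, i a = j a) ∧ (∀ a ∈ C, j a = v)
    · exfalso; apply hj; funext a
      by_cases ha : a ∈ C
      · simp [hj0, ha, h1.2 a ha]
      · simp [hj0, ha, (h1.1 a ha).symm]
    · have : (Jmat C * Dmat C v) i j = 0 := by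
        rw [Dmat, Matrix.mul_diagonal]
        by_cases hA : ∀ a ∉ C, i a = j a
        · by_cases hB : ∀ a ∈ C, j a = v
          · exact absurd ⟨hA, hB⟩ h1
          · simp [Jmat, hB]
        · simp [Jmat, hA]
      rw [this, zero_mul]
  rw [Finset.sum_eq_single j0 (fun j _ hj => hsum j hj) (by simp)]
  have hJ1 : (Jmat C * Dmat C v) i j0 = 1 := by
    rw [Dmat, Matrix.mul_diagonal]
    have hA : ∀ a ∉ C, i a = j0 a := by intro a ha; simp [hj0, ha]
    have hB : ∀ a ∈ C, j0 a = v := by intro a ha; simp [hj0, ha]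
    simp only [Jmat, Matrix.of_apply]
    rw [if_pos hB, if_pos hA]
    norm_num
  rw [hJ1, one_mul]
  have : (∀ a ∉ C, j0 a = k a) ↔ (∀ a ∉ C, i a = k a) := by
    constructor <;> intro h a ha <;> have := h a ha <;> simpa [hj0, ha] using this
  simp [Jmat, this]

lemma Qconv_eq (C : Finset X) (hC : C.Nonempty) (α β : ℝ) :
    Qconv C α β = α • (Dmat C 1 * Jmat C) + β • (Dmat C 0 * Jmat C) - (α + β) • 1 := by
  obtain ⟨c, hc⟩ := hC
  ext i j
  have h1 : (Dmat C 1 * Jmat C) i j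
      = (if ∀ a ∈ C, i a = 1 then (1:ℝ) else 0) * (if ∀ a ∉ C, i a = j a then 1 else 0) := by
    simp [Dmat, Jmat, Matrix.diagonal_mul]
  have h0 : (Dmat C 0 * Jmat C) i j
      = (if ∀ a ∈ C, i a = 0 then (1:ℝ) else 0) * (if ∀ a ∉ C, i a = j a then 1 else 0) := by
    simp [Dmat, Jmat, Matrix.diagonal_mul]
  simp only [Matrix.sub_apply, Matrix.add_apply, Matrix.smul_apply, h1, h0,
    Matrix.one_apply, smul_eq_mul]
  by_cases hij : i = j
  · subst hij
    by_cases hi0 : ∀ a ∈ C, i a = 0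
    · have hi1 : ¬ ∀ a ∈ C, i a = 1 := by
        intro h; have := h c hc; rw [hi0 c hc] at this; exact absurd this (by decide)
      simp [Qconv, hi0, hi1] <;> try tauto
      all_goals split_ifs <;> try tauto
      all_goals ring
    · by_cases hi1 : ∀ a ∈ C, i a = 1
      · simp [Qconv, hi0, hi1] <;> try tauto
        all_goals split_ifs <;> try tauto
        all_goals ring
      · simp [Qconv, hi0, hi1] <;> try tauto
        all_goals split_ifs <;> try tauto
        all_goals ring
  · by_cases hag : ∀ a ∉ C, i a = j a
    · obtain ⟨b, hb⟩ : ∃ b, i b ≠ j b := by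
        by_contra h; push_neg at h; exact hij (funext h)
      have hbC : b ∈ C := by
        by_contra hbC; exact hb (hag b hbC)
      by_cases hi1 : ∀ a ∈ C, i a = 1
      · have hi0 : ¬ ∀ a ∈ C, i a = 0 := by
          intro h; have := h c hc; rw [hi1 c hc] at this; exact absurd this (by decide)
        have hex : ∃ a ∈ C, j a = 0 := by
          refine ⟨b, hbC, fin2_eq_zero_of_ne_one ?_⟩
          intro h; exact hb (by rw [h, hi1 b hbC])
        simp [Qconv, hij, hi1, hi0, hex, hag] <;> try tauto
        all_goals split_ifs <;> try tauto
        all_goals ring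
      · by_cases hi0 : ∀ a ∈ C, i a = 0
        · have hex : ∃ a ∈ C, j a = 1 := by
            refine ⟨b, hbC, fin2_eq_one_of_ne_zero ?_⟩
            intro h; exact hb (by rw [h, hi0 b hbC])
          simp [Qconv, hij, hi1, hi0, hex, hag] <;> try tauto
          all_goals split_ifs <;> try tauto
          all_goals ring <;> try tauto
        all_goals split_ifs <;> try tauto
        all_goals ring
        · simp [Qconv, hij, hi1, hi0, hag] <;> try tauto
          all_goals split_ifs <;> try tauto
          all_goals ring
    · simp [Qconv, hij, hag] <;> try tauto
      all_goals split_ifs <;> try tauto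
      all_goals ring

lemma Qconv_sq (C : Finset X) (hC : C.Nonempty) (α β : ℝ) :
    Qconv C α β * Qconv C α β = (-(α + β)) • Qconv C α β := by
  have key : ∀ v w : Fin 2, (Dmat C v * Jmat C) * (Dmat C w * Jmat C) = Dmat C v * Jmat C := by
    intro v w
    calc (Dmat C v * Jmat C) * (Dmat C w * Jmat C)
        = Dmat C v * (Jmat C * Dmat C w * Jmat C) := by noncomm_ring
      _ = Dmat C v * Jmat C := by rw [JDJ]
  set A := Dmat C 1 * Jmat C with hA
  set B := Dmat C 0 * Jmat C with hB
  have hAA : A * A = A := key 1 1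
  have hAB : A * B = A := key 1 0
  have hBA : B * A = B := key 0 1
  have hBB : B * B = B := key 0 0
  rw [Qconv_eq C hC α β]
  rw [sub_mul, mul_sub, mul_sub, add_mul, mul_add, mul_add]
  simp only [smul_mul_assoc, mul_smul_comm, hAA, hAB, hBA, hBB, one_mul, mul_one,
    smul_smul, smul_sub, smul_add, key]
  ring_nf
  module

/-- exp of an element with `A * A = c • A` in a real Banach algebra. -/
lemma exp_of_sq {𝔸 : Type*} [NormedRing 𝔸] [NormedAlgebra ℝ 𝔸] [CompleteSpace 𝔸]
    (A : 𝔸) (c : ℝ) (hc : c ≠ 0) (h : A * A = c • A) :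
    NormedSpace.exp A = 1 + ((Real.exp c - 1) / c) • A := by
  have hpow : ∀ n : ℕ, A ^ (n + 1) = c ^ n • A := by
    intro n
    induction n with
    | zero => simp
    | succ n ih =>
        rw [pow_succ, ih, smul_mul_assoc, h, smul_smul, ← pow_succ]
  have hf : Summable (fun n : ℕ => c ^ n / Nat.factorial n) := Real.summable_pow_div_factorial c
  have hf1 : Summable (fun n : ℕ => c ^ (n + 1) / (Nat.factorial (n + 1))) := by
    have := (summable_nat_add_iff 1).2 hf
    simpa using this
  have hS : Summable (fun n : ℕ => ((Nat.factorial (n + 1)) : ℝ)⁻¹ * c ^ n) := by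
    have : (fun n : ℕ => ((Nat.factorial (n + 1)) : ℝ)⁻¹ * c ^ n)
        = fun n : ℕ => c⁻¹ * (c ^ (n + 1) / (Nat.factorial (n + 1))) := by
      funext n
      field_simp
      ring
    rw [this]
    exact hf1.mul_left _
  have hexp : Real.exp c = 1 + ∑' n : ℕ, c ^ (n + 1) / (Nat.factorial (n + 1)) := by
    rw [Real.exp_eq_exp_ℝ]
    simp only [NormedSpace.exp_eq_tsum_div]
    rw [hf.tsum_eq_zero_add]
    norm_num
  have hsum : Summable (fun n : ℕ => ((Nat.factorial n : ℝ)⁻¹ • A ^ n)) :=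
    NormedSpace.expSeries_summable' (𝕂 := ℝ) A
  simp only [NormedSpace.exp_eq_tsum ℝ]
  rw [hsum.tsum_eq_zero_add]
  have h2 : (fun n : ℕ => (((Nat.factorial (n + 1)) : ℝ)⁻¹ • A ^ (n + 1)))
      = fun n : ℕ => (((Nat.factorial (n + 1)) : ℝ)⁻¹ * c ^ n) • A := by
    funext n
    rw [hpow n, smul_smul]
  simp only [pow_zero, Nat.factorial_zero, Nat.cast_one, inv_one, one_smul]
  rw [h2, hS.tsum_smul_const]
  congr 1
  congr 1
  have hc2 : c * ∑' n : ℕ, ((Nat.factorial (n + 1)) : ℝ)⁻¹ * c ^ n = Real.exp c - 1 := by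
    rw [← tsum_mul_left, hexp, add_sub_cancel_left]
    refine tsum_congr fun n => ?_
    rw [div_eq_mul_inv]
    ring
  rw [eq_div_iff hc]
  linarith [hc2]

end Aux

/-- Closed form for the transition matrix of a convergence group (from the proof of
Theorem 1): `exp(t Q^{[C]}) = I + ((1 − e^{−(α+β)t})/(α+β)) • Q^{[C]}`. -/
theorem exp_Qconv {X : Type*} [Fintype X] [DecidableEq X]
    (C : Finset X) (hC : C.Nonempty) (α β : ℝ) (hα : 0 < α) (hβ : 0 < β) (t : ℝ) :
    NormedSpace.exp (t • Qconv C α β) =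
      1 + ((1 - Real.exp (-(α + β) * t)) / (α + β)) • Qconv C α β := by
  letI : SeminormedRing (Matrix (X → Fin 2) (X → Fin 2) ℝ) := Matrix.linftyOpSemiNormedRing
  letI : NormedRing (Matrix (X → Fin 2) (X → Fin 2) ℝ) := Matrix.linftyOpNormedRing
  letI : NormedAlgebra ℝ (Matrix (X → Fin 2) (X → Fin 2) ℝ) := Matrix.linftyOpNormedAlgebra
  have hs : α + β ≠ 0 := by positivity
  rcases eq_or_ne t 0 with ht | ht
  · subst ht
    simp [NormedSpace.exp_zero]
  · have hQ := Qconv_sq C hC α β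
    have hAc : (t • Qconv C α β) * (t • Qconv C α β)
        = (-(α + β) * t) • (t • Qconv C α β) := by
      rw [smul_mul_assoc, mul_smul_comm, hQ]
      rw [smul_smul, smul_smul, smul_smul]
      ring_nf
    have hc : -(α + β) * t ≠ 0 := by
      exact mul_ne_zero (neg_ne_zero.2 hs) ht
    erw [exp_of_sq (t • Qconv C α β) (-(α + β) * t) hc hAc]
    congr 1
    rw [smul_smul]
    congr 1
    rw [div_mul_eq_mul_div, div_eq_div_iff hc hs]
    ring
end

section
/- For every y = (y_1,…,y_9) ∈ (0,1)^9, with r_{0011}, r_{0101}, r_{0110}, r_{0111}, r_{1001}, r_{1010}, r_{1100}, r_{1101}, δ defined by the CDM-5 y-parametrization, all of the following recovery identities hold (in particular all denominators involved are nonzero): y_1 = δ/r_{0111}; y_2 = r_{0111}√(r_{1001} r_{1010}) / (δ √r_{0011}); y_3 = δ/√(r_{0011} r_{1001} r_{1010}); y_4 = r_{1101} δ √r_{0011} / (r_{0111} r_{1100} √(r_{1001} r_{1010})); y_5 = δ/r_{1101}; y_6 = r_{1101} √(r_{0011} r_{1010}) / (δ √r_{1001}); y_7 = δ (r_{0110}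 r_{1101} δ √r_{0011} − r_{0111}² r_{1100} √(r_{1001} r_{1010})) / (r_{0111} r_{1100} √(r_{0011} r_{1001}) (δ √r_{1001} − r_{1101} √(r_{0011} r_{1010}))); y_8 = r_{0111} r_{1001} r_{1100} / (r_{1101} δ); y_9 = r_{1101} (r_{0101} δ − r_{0111} r_{1101}) / (r_{1101} δ − r_{0111} r_{1001} r_{1100}). Consequently, the map (0,1)^9 → ℝ^9 sending y to (r_{0011}, r_{0101}, r_{0110}, r_{0111}, r_{1001}, r_{1010}, r_{1100}, r_{1101}, δ) is injective. (Proposition 2: the parameter set of the 4-taxon convergence-divergence model CDM 5 is identifiable.) -/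
lemma cdm5_recover
    (y₁ y₂ y₃ y₄ y₅ y₆ y₇ y₈ y₉ : ℝ)
    (hy₁ : y₁ ∈ Set.Ioo (0 : ℝ) 1) (hy₂ : y₂ ∈ Set.Ioo (0 : ℝ) 1)
    (hy₃ : y₃ ∈ Set.Ioo (0 : ℝ) 1) (hy₄ : y₄ ∈ Set.Ioo (0 : ℝ) 1)
    (hy₅ : y₅ ∈ Set.Ioo (0 : ℝ) 1) (hy₆ : y₆ ∈ Set.Ioo (0 : ℝ) 1)
    (hy₇ : y₇ ∈ Set.Ioo (0 : ℝ) 1) (hy₈ : y₈ ∈ Set.Ioo (0 : ℝ) 1)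
    (hy₉ : y₉ ∈ Set.Ioo (0 : ℝ) 1)
    (r0011 r0101 r0110 r0111 r1001 r1010 r1100 r1101 d : ℝ)
    (h0011 : r0011 = y₄ * y₅ * y₆ * y₈)
    (h0101 : r0101 = y₉ * (1 - y₈) + y₂ * y₃ * y₄ * y₆ * y₈)
    (h0110 : r0110 = y₈ * (y₇ * (1 - y₆) + y₂ * y₃ * y₅ * y₆))
    (h0111 : r0111 = y₂ * y₃ * y₄ * y₅ * y₆ * y₈)
    (h1001 : r1001 = y₁ * y₂ * y₄ * y₈)
    (h1010 : r1010 = y₁ * y₂ * y₅ * y₆)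
    (h1100 : r1100 = y₁ * y₃ * y₆ * y₈)
    (h1101 : r1101 = y₁ * y₂ * y₃ * y₄ * y₆ * y₈)
    (hd : d = y₁ * y₂ * y₃ * y₄ * y₅ * y₆ * y₈) :
    (r0111 ≠ 0 ∧
     d * Real.sqrt r0011 ≠ 0 ∧
     Real.sqrt (r0011 * r1001 * r1010) ≠ 0 ∧
     r0111 * r1100 * Real.sqrt (r1001 * r1010) ≠ 0 ∧
     r1101 ≠ 0 ∧
     d * Real.sqrt r1001 ≠ 0 ∧
     r0111 * r1100 * Real.sqrt (r0011 * r1001) *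
       (d * Real.sqrt r1001 - r1101 * Real.sqrt (r0011 * r1010)) ≠ 0 ∧
     r1101 * d ≠ 0 ∧
     r1101 * d - r0111 * r1001 * r1100 ≠ 0) ∧
    (y₁ = d / r0111 ∧
     y₂ = r0111 * Real.sqrt (r1001 * r1010) / (d * Real.sqrt r0011) ∧
     y₃ = d / Real.sqrt (r0011 * r1001 * r1010) ∧
     y₄ = r1101 * d * Real.sqrt r0011 /
       (r0111 * r1100 * Real.sqrt (r1001 * r1010)) ∧
     y₅ = d / r1101 ∧
     y₆ = r1101 * Real.sqrt (r0011 * r1010) / (d * Real.sqrt r1001) ∧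
     y₇ = d * (r0110 * r1101 * d * Real.sqrt r0011 -
         r0111 ^ 2 * r1100 * Real.sqrt (r1001 * r1010)) /
       (r0111 * r1100 * Real.sqrt (r0011 * r1001) *
         (d * Real.sqrt r1001 - r1101 * Real.sqrt (r0011 * r1010))) ∧
     y₈ = r0111 * r1001 * r1100 / (r1101 * d) ∧
     y₉ = r1101 * (r0101 * d - r0111 * r1101) /
       (r1101 * d - r0111 * r1001 * r1100)) := by
  obtain ⟨p₁, q₁⟩ := hy₁; obtain ⟨p₂, q₂⟩ := hy₂; obtain ⟨p₃, q₃⟩ := hy₃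
  obtain ⟨p₄, q₄⟩ := hy₄; obtain ⟨p₅, q₅⟩ := hy₅; obtain ⟨p₆, q₆⟩ := hy₆
  obtain ⟨p₇, q₇⟩ := hy₇; obtain ⟨p₈, q₈⟩ := hy₈; obtain ⟨p₉, q₉⟩ := hy₉
  subst h0011 h0101 h0110 h0111 h1001 h1010 h1100 h1101 hd
  have h6 : (0:ℝ) < 1 - y₆ := by linarith
  have h8 : (0:ℝ) < 1 - y₈ := by linarith
  have hu : (0:ℝ) < Real.sqrt (y₄ * y₅ * y₆ * y₈) := Real.sqrt_pos.2 (by positivity)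
  have ht : (0:ℝ) < Real.sqrt (y₁ * y₂ * y₄ * y₈) := Real.sqrt_pos.2 (by positivity)
  have hv : (0:ℝ) < Real.sqrt (y₁ * y₂ * y₅ * y₆) := Real.sqrt_pos.2 (by positivity)
  have hs1 : Real.sqrt (y₁ * y₂ * y₄ * y₈ * (y₁ * y₂ * y₅ * y₆))
      = y₁ * y₂ * Real.sqrt (y₄ * y₅ * y₆ * y₈) := by
    rw [show y₁ * y₂ * y₄ * y₈ * (y₁ * y₂ * y₅ * y₆)
        = (y₁ * y₂) ^ 2 * (y₄ * y₅ * y₆ * y₈) by ring,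
      Real.sqrt_mul (sq_nonneg _), Real.sqrt_sq (by positivity)]
  have hs2 : Real.sqrt (y₄ * y₅ * y₆ * y₈ * (y₁ * y₂ * y₄ * y₈) * (y₁ * y₂ * y₅ * y₆))
      = y₁ * y₂ * (y₄ * y₅ * y₆ * y₈) := by
    rw [show y₄ * y₅ * y₆ * y₈ * (y₁ * y₂ * y₄ * y₈) * (y₁ * y₂ * y₅ * y₆)
        = (y₁ * y₂ * (y₄ * y₅ * y₆ * y₈)) ^ 2 by ring,
      Real.sqrt_sq (by positivity)]
  have hs3 : Real.sqrt (y₄ * y₅ * y₆ * y₈ * (y₁ * y₂ * y₅ * y₆))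
      = y₅ * y₆ * Real.sqrt (y₁ * y₂ * y₄ * y₈) := by
    rw [show y₄ * y₅ * y₆ * y₈ * (y₁ * y₂ * y₅ * y₆)
        = (y₅ * y₆) ^ 2 * (y₁ * y₂ * y₄ * y₈) by ring,
      Real.sqrt_mul (sq_nonneg _), Real.sqrt_sq (by positivity)]
  have hs4 : Real.sqrt (y₄ * y₅ * y₆ * y₈ * (y₁ * y₂ * y₄ * y₈))
      = y₄ * y₈ * Real.sqrt (y₁ * y₂ * y₅ * y₆) := by
    rw [show y₄ * y₅ * y₆ * y₈ * (y₁ * y₂ * y₄ * y₈)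
        = (y₄ * y₈) ^ 2 * (y₁ * y₂ * y₅ * y₆) by ring,
      Real.sqrt_mul (sq_nonneg _), Real.sqrt_sq (by positivity)]
  have htv : Real.sqrt (y₁ * y₂ * y₅ * y₆) * Real.sqrt (y₁ * y₂ * y₄ * y₈)
      = y₁ * y₂ * Real.sqrt (y₄ * y₅ * y₆ * y₈) := by
    rw [← Real.sqrt_mul (by positivity),
      show y₁ * y₂ * y₅ * y₆ * (y₁ * y₂ * y₄ * y₈)
        = (y₁ * y₂) ^ 2 * (y₄ * y₅ * y₆ * y₈) by ring,
      Real.sqrt_mul (sq_nonneg _), Real.sqrt_sq (by positivity)]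
  rw [hs1, hs2, hs3, hs4]
  refine ⟨⟨by positivity, by positivity, by positivity, by positivity, by positivity,
    by positivity, ?_, by positivity, ?_⟩, ?_, ?_, ?_, ?_, ?_, ?_, ?_, ?_, ?_⟩
  · have : y₁ * y₂ * y₃ * y₄ * y₅ * y₆ * y₈ * Real.sqrt (y₁ * y₂ * y₄ * y₈) -
        y₁ * y₂ * y₃ * y₄ * y₆ * y₈ * (y₅ * y₆ * Real.sqrt (y₁ * y₂ * y₄ * y₈))
        = (y₁ * y₂ * y₃ * y₄ * y₅ * y₆ * y₈ * (1 - y₆)) * Real.sqrt (y₁ * y₂ * y₄ * y₈) := by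
      ring
    rw [this]
    positivity
  · have : y₁ * y₂ * y₃ * y₄ * y₆ * y₈ * (y₁ * y₂ * y₃ * y₄ * y₅ * y₆ * y₈) -
        y₂ * y₃ * y₄ * y₅ * y₆ * y₈ * (y₁ * y₂ * y₄ * y₈) * (y₁ * y₃ * y₆ * y₈)
        = (y₁ * y₂ * y₃ * y₄ * y₆ * y₈) * (y₁ * y₂ * y₃ * y₄ * y₅ * y₆ * y₈) * (1 - y₈) := by
      ring
    rw [this]
    positivity
  · field_simp
  · rw [eq_div_iff (by positivity)]; ring
  · rw [eq_div_iff (by positivity)]; ring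
  · rw [eq_div_iff (by positivity)]; ring
  · field_simp
  · rw [eq_div_iff (by positivity)]; ring
  · -- y₇
    have hD : y₂ * y₃ * y₄ * y₅ * y₆ * y₈ * (y₁ * y₃ * y₆ * y₈) *
        (y₄ * y₈ * Real.sqrt (y₁ * y₂ * y₅ * y₆)) *
        (y₁ * y₂ * y₃ * y₄ * y₅ * y₆ * y₈ * Real.sqrt (y₁ * y₂ * y₄ * y₈) -
          y₁ * y₂ * y₃ * y₄ * y₆ * y₈ * (y₅ * y₆ * Real.sqrt (y₁ * y₂ * y₄ * y₈)))
        = y₂ * y₃ * y₄ * y₅ * y₆ * y₈ * (y₁ * y₃ * y₆ * y₈) * (y₄ * y₈) *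
          (y₁ * y₂ * y₃ * y₄ * y₅ * y₆ * y₈ * (1 - y₆)) *
          (y₁ * y₂ * Real.sqrt (y₄ * y₅ * y₆ * y₈)) := by
      rw [← htv]; ring
    rw [hD, eq_div_iff (by positivity)]
    ring
  · rw [eq_div_iff (by positivity)]; ring
  · have hden : y₁ * y₂ * y₃ * y₄ * y₆ * y₈ * (y₁ * y₂ * y₃ * y₄ * y₅ * y₆ * y₈) -
        y₂ * y₃ * y₄ * y₅ * y₆ * y₈ * (y₁ * y₂ * y₄ * y₈) * (y₁ * y₃ * y₆ * y₈)
        = (y₁ * y₂ * y₃ * y₄ * y₆ * y₈) * (y₁ * y₂ * y₃ * y₄ * y₅ * y₆ * y₈) * (1 - y₈) := by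
      ring
    rw [hden, eq_div_iff (by positivity)]
    ring

/-- Proposition 2: the parameter set of the 4-taxon convergence-divergence model CDM 5
is identifiable.  Each parameter `yᵢ ∈ (0,1)` is recovered from the coordinates
`r₀₀₁₁, r₀₁₀₁, r₀₁₁₀, r₀₁₁₁, r₁₀₀₁, r₁₀₁₀, r₁₁₀₀, r₁₁₀₁, δ` of the transformed
phylogenetic tensor (all denominators being nonzero), and consequently the
parametrization map is injective on `(0,1)⁹`. -/
theorem cdm5_parameters_identifiable
    (y₁ y₂ y₃ y₄ y₅ y₆ y₇ y₈ y₉ : ℝ)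
    (hy₁ : y₁ ∈ Set.Ioo (0 : ℝ) 1) (hy₂ : y₂ ∈ Set.Ioo (0 : ℝ) 1)
    (hy₃ : y₃ ∈ Set.Ioo (0 : ℝ) 1) (hy₄ : y₄ ∈ Set.Ioo (0 : ℝ) 1)
    (hy₅ : y₅ ∈ Set.Ioo (0 : ℝ) 1) (hy₆ : y₆ ∈ Set.Ioo (0 : ℝ) 1)
    (hy₇ : y₇ ∈ Set.Ioo (0 : ℝ) 1) (hy₈ : y₈ ∈ Set.Ioo (0 : ℝ) 1)
    (hy₉ : y₉ ∈ Set.Ioo (0 : ℝ) 1)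
    (r0011 r0101 r0110 r0111 r1001 r1010 r1100 r1101 d : ℝ)
    (h0011 : r0011 = y₄ * y₅ * y₆ * y₈)
    (h0101 : r0101 = y₉ * (1 - y₈) + y₂ * y₃ * y₄ * y₆ * y₈)
    (h0110 : r0110 = y₈ * (y₇ * (1 - y₆) + y₂ * y₃ * y₅ * y₆))
    (h0111 : r0111 = y₂ * y₃ * y₄ * y₅ * y₆ * y₈)
    (h1001 : r1001 = y₁ * y₂ * y₄ * y₈)
    (h1010 : r1010 = y₁ * y₂ * y₅ * y₆)
    (h1100 : r1100 = y₁ * y₃ * y₆ * y₈)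
    (h1101 : r1101 = y₁ * y₂ * y₃ * y₄ * y₆ * y₈)
    (hd : d = y₁ * y₂ * y₃ * y₄ * y₅ * y₆ * y₈) :
    -- all denominators involved are nonzero
    (r0111 ≠ 0 ∧
     d * Real.sqrt r0011 ≠ 0 ∧
     Real.sqrt (r0011 * r1001 * r1010) ≠ 0 ∧
     r0111 * r1100 * Real.sqrt (r1001 * r1010) ≠ 0 ∧
     r1101 ≠ 0 ∧
     d * Real.sqrt r1001 ≠ 0 ∧
     r0111 * r1100 * Real.sqrt (r0011 * r1001) *
       (d * Real.sqrt r1001 - r1101 * Real.sqrt (r0011 * r1010)) ≠ 0 ∧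
     r1101 * d ≠ 0 ∧
     r1101 * d - r0111 * r1001 * r1100 ≠ 0) ∧
    -- the recovery identities
    (y₁ = d / r0111 ∧
     y₂ = r0111 * Real.sqrt (r1001 * r1010) / (d * Real.sqrt r0011) ∧
     y₃ = d / Real.sqrt (r0011 * r1001 * r1010) ∧
     y₄ = r1101 * d * Real.sqrt r0011 /
       (r0111 * r1100 * Real.sqrt (r1001 * r1010)) ∧
     y₅ = d / r1101 ∧
     y₆ = r1101 * Real.sqrt (r0011 * r1010) / (d * Real.sqrt r1001) ∧
     y₇ = d * (r0110 * r1101 * d * Real.sqrt r0011 -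
         r0111 ^ 2 * r1100 * Real.sqrt (r1001 * r1010)) /
       (r0111 * r1100 * Real.sqrt (r0011 * r1001) *
         (d * Real.sqrt r1001 - r1101 * Real.sqrt (r0011 * r1010))) ∧
     y₈ = r0111 * r1001 * r1100 / (r1101 * d) ∧
     y₉ = r1101 * (r0101 * d - r0111 * r1101) /
       (r1101 * d - r0111 * r1001 * r1100)) ∧
    -- consequently, the parametrization is injective on (0,1)⁹
    (∀ z₁ z₂ z₃ z₄ z₅ z₆ z₇ z₈ z₉ : ℝ,
      z₁ ∈ Set.Ioo (0 : ℝ) 1 → z₂ ∈ Set.Ioo (0 : ℝ) 1 →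
      z₃ ∈ Set.Ioo (0 : ℝ) 1 → z₄ ∈ Set.Ioo (0 : ℝ) 1 →
      z₅ ∈ Set.Ioo (0 : ℝ) 1 → z₆ ∈ Set.Ioo (0 : ℝ) 1 →
      z₇ ∈ Set.Ioo (0 : ℝ) 1 → z₈ ∈ Set.Ioo (0 : ℝ) 1 →
      z₉ ∈ Set.Ioo (0 : ℝ) 1 →
      z₄ * z₅ * z₆ * z₈ = r0011 →
      z₉ * (1 - z₈) + z₂ * z₃ * z₄ * z₆ * z₈ = r0101 →
      z₈ * (z₇ * (1 - z₆) + z₂ * z₃ * z₅ * z₆) = r0110 →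
      z₂ * z₃ * z₄ * z₅ * z₆ * z₈ = r0111 →
      z₁ * z₂ * z₄ * z₈ = r1001 →
      z₁ * z₂ * z₅ * z₆ = r1010 →
      z₁ * z₃ * z₆ * z₈ = r1100 →
      z₁ * z₂ * z₃ * z₄ * z₆ * z₈ = r1101 →
      z₁ * z₂ * z₃ * z₄ * z₅ * z₆ * z₈ = d →
      z₁ = y₁ ∧ z₂ = y₂ ∧ z₃ = y₃ ∧ z₄ = y₄ ∧ z₅ = y₅ ∧
        z₆ = y₆ ∧ z₇ = y₇ ∧ z₈ = y₈ ∧ z₉ = y₉) := by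
  obtain ⟨hden, hrec⟩ := cdm5_recover y₁ y₂ y₃ y₄ y₅ y₆ y₇ y₈ y₉ hy₁ hy₂ hy₃ hy₄ hy₅
    hy₆ hy₇ hy₈ hy₉ r0011 r0101 r0110 r0111 r1001 r1010 r1100 r1101 d
    h0011 h0101 h0110 h0111 h1001 h1010 h1100 h1101 hd
  refine ⟨hden, hrec, ?_⟩
  intro z₁ z₂ z₃ z₄ z₅ z₆ z₇ z₈ z₉ hz₁ hz₂ hz₃ hz₄ hz₅ hz₆ hz₇ hz₈ hz₉
    e0011 e0101 e0110 e0111 e1001 e1010 e1100 e1101 ed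
  obtain ⟨-, hz⟩ := cdm5_recover z₁ z₂ z₃ z₄ z₅ z₆ z₇ z₈ z₉ hz₁ hz₂ hz₃ hz₄ hz₅
    hz₆ hz₇ hz₈ hz₉ r0011 r0101 r0110 r0111 r1001 r1010 r1100 r1101 d
    e0011.symm e0101.symm e0110.symm e0111.symm e1001.symm e1010.symm e1100.symm
    e1101.symm ed.symm
  obtain ⟨a1, a2, a3, a4, a5, a6, a7, a8, a9⟩ := hrec
  obtain ⟨b1, b2, b3, b4, b5, b6, b7, b8, b9⟩ := hz
  exact ⟨b1.trans a1.symm, b2.trans a2.symm, b3.trans a3.symm, b4.trans a4.symm,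
    b5.trans a5.symm, b6.trans a6.symm, b7.trans a7.symm, b8.trans a8.symm,
    b9.trans a9.symm⟩
end

section
/- Suppose y = (y_1,…,y_9) ∈ (0,1)^9 and z = (z_1,…,z_9) ∈ (0,1)^9 satisfy the twelve equations: y_4y_5y_6y_8 = z_4z_5z_6z_8; y_9(1−y_8)+y_2y_3y_4y_6y_8 = z_8(z_7(1−z_6)+z_2z_3z_5z_6); y_8(y_7(1−y_6)+y_2y_3y_5y_6) = z_9(1−z_8)+z_2z_3z_4z_6z_8; y_2y_3y_4y_5y_6y_8 = z_2z_3z_4z_5z_6z_8; y_1y_2y_4y_8 = z_1z_2z_5z_6; y_1y_2y_5y_6 = z_1z_2z_4z_8; y_1y_2y_4y_5y_6y_8 = z_1z_2z_4z_5z_6z_8; y_1y_3y_6y_8 = z_1z_3z_6z_8; y_1y_2y_3y_4y_6y_8 = z_1z_2z_3z_5z_6z_8; y_1y_2y_3y_5y_6y_8 = z_1z_2z_3z_4z_6z_8; y_1(y_4y_8(y_2y_7(1−y_6)+y_3y_5y_6)+y_2y_5y_6y_9(1−y_8)) = z_1(z_4z_8(z_2z_7(1−z_6)+z_3z_5z_6)+z_2z_5z_6z_9(1−z_8));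 and y_1y_2y_3y_4y_5y_6y_8 = z_1z_2z_3z_4z_5z_6z_8. Then z_4 z_7 z_8 = z_5 z_9. (From the proof of Theorem 5: two CDM 5 models differing only in leaf labeling can agree only at non-generic parameters, hence CDM 5 leaf labelings are distinguishable.) -/
/-- From the proof of Theorem 5: if the Hadamard-basis phylogenetic tensors of CDM 5
with leaf labelings `(o,(a,(b,c)))` (parameters `y`) and `(o,(a,(c,b)))` (parameters `z`)
coincide, then `z₄ z₇ z₈ = z₅ z₉`, a non-generic relation. -/
theorem cdm5_leaf_labelings_agree_only_nongeneric
    (y₁ y₂ y₃ y₄ y₅ y₆ y₇ y₈ y₉ z₁ z₂ z₃ z₄ z₅ z₆ z₇ z₈ z₉ : ℝ)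
    (hy₁ : y₁ ∈ Set.Ioo (0 : ℝ) 1) (hy₂ : y₂ ∈ Set.Ioo (0 : ℝ) 1)
    (hy₃ : y₃ ∈ Set.Ioo (0 : ℝ) 1) (hy₄ : y₄ ∈ Set.Ioo (0 : ℝ) 1)
    (hy₅ : y₅ ∈ Set.Ioo (0 : ℝ) 1) (hy₆ : y₆ ∈ Set.Ioo (0 : ℝ) 1)
    (hy₇ : y₇ ∈ Set.Ioo (0 : ℝ) 1) (hy₈ : y₈ ∈ Set.Ioo (0 : ℝ) 1)
    (hy₉ : y₉ ∈ Set.Ioo (0 : ℝ) 1)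
    (hz₁ : z₁ ∈ Set.Ioo (0 : ℝ) 1) (hz₂ : z₂ ∈ Set.Ioo (0 : ℝ) 1)
    (hz₃ : z₃ ∈ Set.Ioo (0 : ℝ) 1) (hz₄ : z₄ ∈ Set.Ioo (0 : ℝ) 1)
    (hz₅ : z₅ ∈ Set.Ioo (0 : ℝ) 1) (hz₆ : z₆ ∈ Set.Ioo (0 : ℝ) 1)
    (hz₇ : z₇ ∈ Set.Ioo (0 : ℝ) 1) (hz₈ : z₈ ∈ Set.Ioo (0 : ℝ) 1)
    (hz₉ : z₉ ∈ Set.Ioo (0 : ℝ) 1)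
    (e₁ : y₄ * y₅ * y₆ * y₈ = z₄ * z₅ * z₆ * z₈)
    (e₂ : y₉ * (1 - y₈) + y₂ * y₃ * y₄ * y₆ * y₈ =
      z₈ * (z₇ * (1 - z₆) + z₂ * z₃ * z₅ * z₆))
    (e₃ : y₈ * (y₇ * (1 - y₆) + y₂ * y₃ * y₅ * y₆) =
      z₉ * (1 - z₈) + z₂ * z₃ * z₄ * z₆ * z₈)
    (e₄ : y₂ * y₃ * y₄ * y₅ * y₆ * y₈ = z₂ * z₃ * z₄ * z₅ * z₆ * z₈)
    (e₅ : y₁ * y₂ * y₄ * y₈ = z₁ * z₂ * z₅ * z₆)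
    (e₆ : y₁ * y₂ * y₅ * y₆ = z₁ * z₂ * z₄ * z₈)
    (e₇ : y₁ * y₂ * y₄ * y₅ * y₆ * y₈ = z₁ * z₂ * z₄ * z₅ * z₆ * z₈)
    (e₈ : y₁ * y₃ * y₆ * y₈ = z₁ * z₃ * z₆ * z₈)
    (e₉ : y₁ * y₂ * y₃ * y₄ * y₆ * y₈ = z₁ * z₂ * z₃ * z₅ * z₆ * z₈)
    (e₁₀ : y₁ * y₂ * y₃ * y₅ * y₆ * y₈ = z₁ * z₂ * z₃ * z₄ * z₆ * z₈)
    (e₁₁ : y₁ * (y₄ * y₈ * (y₂ * y₇ * (1 - y₆) + y₃ * y₅ * y₆) +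
        y₂ * y₅ * y₆ * y₉ * (1 - y₈)) =
      z₁ * (z₄ * z₈ * (z₂ * z₇ * (1 - z₆) + z₃ * z₅ * z₆) +
        z₂ * z₅ * z₆ * z₉ * (1 - z₈)))
    (e₁₂ : y₁ * y₂ * y₃ * y₄ * y₅ * y₆ * y₈ = z₁ * z₂ * z₃ * z₄ * z₅ * z₆ * z₈) :
    z₄ * z₇ * z₈ = z₅ * z₉ := by
  obtain ⟨pz₁, qz₁⟩ := hz₁
  obtain ⟨pz₂, qz₂⟩ := hz₂
  obtain ⟨pz₃, qz₃⟩ := hz₃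
  obtain ⟨pz₄, qz₄⟩ := hz₄
  obtain ⟨pz₅, qz₅⟩ := hz₅
  obtain ⟨pz₆, qz₆⟩ := hz₆
  obtain ⟨pz₇, qz₇⟩ := hz₇
  obtain ⟨pz₈, qz₈⟩ := hz₈
  obtain ⟨pz₉, qz₉⟩ := hz₉
  have h1 : y₁ * y₂ = z₁ * z₂ := by
    have hne : z₁ * z₂ * z₄ * z₅ * z₆ * z₈ ≠ 0 := by positivity
    refine mul_right_cancel₀ hne ?_
    linear_combination (z₁*z₂*z₄*z₈)*e₅ + (y₁*y₂*y₄*y₈)*e₆ - (y₁*y₂)*e₇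
  have h6 : y₁ * y₂ * y₃ = z₁ * z₂ * z₃ := by
    have hne : z₄ * z₅ * z₆ * z₈ ≠ 0 := by positivity
    refine mul_right_cancel₀ hne ?_
    linear_combination e₁₂ - (y₁*y₂*y₃)*e₁
  have h7 : y₃ = z₃ := by
    have hne : z₁ * z₂ ≠ 0 := by positivity
    refine mul_right_cancel₀ hne ?_
    linear_combination h6 - y₃*h1
  have h4 : y₃ * y₆ = z₃ * z₈ := by
    have hne : z₁ * z₂ * z₅ * z₆ ≠ 0 := by positivity
    refine mul_right_cancel₀ hne ?_
    linear_combination e₉ - (y₃*y₆)*e₅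
  have h8 : y₆ = z₈ := by
    have hne : z₃ ≠ 0 := by positivity
    refine mul_right_cancel₀ hne ?_
    linear_combination h4 - y₆*h7
  have h5 : y₃ * y₈ = z₃ * z₆ := by
    have hne : z₁ * z₂ * z₄ * z₈ ≠ 0 := by positivity
    refine mul_right_cancel₀ hne ?_
    linear_combination e₁₀ - (y₃*y₈)*e₆
  have h9 : y₈ = z₆ := by
    have hne : z₃ ≠ 0 := by positivity
    refine mul_right_cancel₀ hne ?_
    linear_combination h5 - y₈*h7
  have h2 : y₄ * y₈ = z₅ * z₆ := by
    have hne : z₁ * z₂ ≠ 0 := by positivity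
    refine mul_right_cancel₀ hne ?_
    linear_combination e₅ - (y₄*y₈)*h1
  have h10 : y₄ = z₅ := by
    have hne : z₆ ≠ 0 := by positivity
    refine mul_right_cancel₀ hne ?_
    linear_combination h2 - y₄*h9
  have h3 : y₅ * y₆ = z₄ * z₈ := by
    have hne : z₁ * z₂ ≠ 0 := by positivity
    refine mul_right_cancel₀ hne ?_
    linear_combination e₆ - (y₅*y₆)*h1
  have h11 : y₅ = z₄ := by
    have hne : z₈ ≠ 0 := by positivity
    refine mul_right_cancel₀ hne ?_
    linear_combination h3 - y₅*h8
  simp only [h7, h8, h9, h10, h11] at e₂ e₃ e₈ e₁₁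
  have h12 : y₁ = z₁ := by
    have hne : z₃ * z₈ * z₆ ≠ 0 := by positivity
    refine mul_right_cancel₀ hne ?_
    linear_combination e₈
  simp only [h12] at h1 e₁₁
  have h13 : y₂ = z₂ := by
    have hne : z₁ ≠ 0 := by positivity
    refine mul_left_cancel₀ hne ?_
    linear_combination h1
  simp only [h13] at e₂ e₃ e₁₁
  have h6p : (0:ℝ) < 1 - z₆ := by linarith
  have h8p : (0:ℝ) < 1 - z₈ := by linarith
  have hy9 : y₉ = z₇ * z₈ := by
    have hne : (1 : ℝ) - z₆ ≠ 0 := ne_of_gt h6p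
    refine mul_right_cancel₀ hne ?_
    linear_combination e₂
  have hy7 : y₇ * z₆ = z₉ := by
    have hne : (1 : ℝ) - z₈ ≠ 0 := ne_of_gt h8p
    refine mul_right_cancel₀ hne ?_
    linear_combination e₃
  have hne : z₁ * z₂ * (1 - z₆) * (1 - z₈) ≠ 0 := by positivity
  refine mul_right_cancel₀ hne ?_
  linear_combination (-1)*e₁₁ + (z₁*z₂*z₅*(1-z₈))*hy7 + (z₁*z₂*z₄*z₈*(1-z₆))*hy9
end

section
/- There exist no y = (y_1,…,y_8) ∈ (0,1)^8 and z = (z_1,…,z_8) ∈ (0,1)^8 such that, setting y_9 = z_9 = 1, the twelve equations hold: y_4y_5y_6y_8 = z_4z_5z_6z_8; y_9(1−y_8)+y_2y_3y_4y_6y_8 = z_8(z_7(1−z_6)+z_2z_3z_5z_6); y_8(y_7(1−y_6)+y_2y_3y_5y_6) = z_9(1−z_8)+z_2z_3z_4z_6z_8; y_2y_3y_4y_5y_6y_8 = z_2z_3z_4z_5z_6z_8; y_1y_2y_4y_8 = z_1z_2z_5z_6; y_1y_2y_5y_6 = z_1z_2z_4z_8; y_1y_2y_4y_5y_6y_8 =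 z_1z_2z_4z_5z_6z_8; y_1y_3y_6y_8 = z_1z_3z_6z_8; y_1y_2y_3y_4y_6y_8 = z_1z_2z_3z_5z_6z_8; y_1y_2y_3y_5y_6y_8 = z_1z_2z_3z_4z_6z_8; y_1(y_4y_8(y_2y_7(1−y_6)+y_3y_5y_6)+y_2y_5y_6y_9(1−y_8)) = z_1(z_4z_8(z_2z_7(1−z_6)+z_3z_5z_6)+z_2z_5z_6z_9(1−z_8)); and y_1y_2y_3y_4y_5y_6y_8 = z_1z_2z_3z_4z_5z_6z_8. (From the proof of Theorem 5: any two differently leaf-labeled copies of CDM 4 have disjoint generic parameter spaces, hence are distinguishable.) -/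
/-- From the proof of Theorem 5: the Hadamard-basis phylogenetic tensors of CDM 4
(CDM 5 with ninth parameter fixed to 1) with leaf labelings `(o,(a,(b,c)))` and
`(o,(a,(c,b)))` never coincide for generic parameters: there are no
`y, z ∈ (0,1)⁸` satisfying the twelve coordinate equations with `y₉ = z₉ = 1`. -/
theorem cdm4_leaf_labelings_distinguishable :
    ¬ ∃ y₁ y₂ y₃ y₄ y₅ y₆ y₇ y₈ z₁ z₂ z₃ z₄ z₅ z₆ z₇ z₈ : ℝ,
      y₁ ∈ Set.Ioo (0 : ℝ) 1 ∧ y₂ ∈ Set.Ioo (0 : ℝ) 1 ∧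
      y₃ ∈ Set.Ioo (0 : ℝ) 1 ∧ y₄ ∈ Set.Ioo (0 : ℝ) 1 ∧
      y₅ ∈ Set.Ioo (0 : ℝ) 1 ∧ y₆ ∈ Set.Ioo (0 : ℝ) 1 ∧
      y₇ ∈ Set.Ioo (0 : ℝ) 1 ∧ y₈ ∈ Set.Ioo (0 : ℝ) 1 ∧
      z₁ ∈ Set.Ioo (0 : ℝ) 1 ∧ z₂ ∈ Set.Ioo (0 : ℝ) 1 ∧
      z₃ ∈ Set.Ioo (0 : ℝ) 1 ∧ z₄ ∈ Set.Ioo (0 : ℝ) 1 ∧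
      z₅ ∈ Set.Ioo (0 : ℝ) 1 ∧ z₆ ∈ Set.Ioo (0 : ℝ) 1 ∧
      z₇ ∈ Set.Ioo (0 : ℝ) 1 ∧ z₈ ∈ Set.Ioo (0 : ℝ) 1 ∧
      y₄ * y₅ * y₆ * y₈ = z₄ * z₅ * z₆ * z₈ ∧
      (1 : ℝ) * (1 - y₈) + y₂ * y₃ * y₄ * y₆ * y₈ =
        z₈ * (z₇ * (1 - z₆) + z₂ * z₃ * z₅ * z₆) ∧
      y₈ * (y₇ * (1 - y₆) + y₂ * y₃ * y₅ * y₆) =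
        (1 : ℝ) * (1 - z₈) + z₂ * z₃ * z₄ * z₆ * z₈ ∧
      y₂ * y₃ * y₄ * y₅ * y₆ * y₈ = z₂ * z₃ * z₄ * z₅ * z₆ * z₈ ∧
      y₁ * y₂ * y₄ * y₈ = z₁ * z₂ * z₅ * z₆ ∧
      y₁ * y₂ * y₅ * y₆ = z₁ * z₂ * z₄ * z₈ ∧
      y₁ * y₂ * y₄ * y₅ * y₆ * y₈ = z₁ * z₂ * z₄ * z₅ * z₆ * z₈ ∧
      y₁ * y₃ * y₆ * y₈ = z₁ * z₃ * z₆ * z₈ ∧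
      y₁ * y₂ * y₃ * y₄ * y₆ * y₈ = z₁ * z₂ * z₃ * z₅ * z₆ * z₈ ∧
      y₁ * y₂ * y₃ * y₅ * y₆ * y₈ = z₁ * z₂ * z₃ * z₄ * z₆ * z₈ ∧
      y₁ * (y₄ * y₈ * (y₂ * y₇ * (1 - y₆) + y₃ * y₅ * y₆) +
          y₂ * y₅ * y₆ * (1 : ℝ) * (1 - y₈)) =
        z₁ * (z₄ * z₈ * (z₂ * z₇ * (1 - z₆) + z₃ * z₅ * z₆) +
          z₂ * z₅ * z₆ * (1 : ℝ) * (1 - z₈)) ∧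
      y₁ * y₂ * y₃ * y₄ * y₅ * y₆ * y₈ = z₁ * z₂ * z₃ * z₄ * z₅ * z₆ * z₈ := by
  rintro ⟨y₁, y₂, y₃, y₄, y₅, y₆, y₇, y₈, z₁, z₂, z₃, z₄, z₅, z₆, z₇, z₈,
    ⟨hy₁, hy₁'⟩, ⟨hy₂, hy₂'⟩, ⟨hy₃, hy₃'⟩, ⟨hy₄, hy₄'⟩, ⟨hy₅, hy₅'⟩, ⟨hy₆, hy₆'⟩,
    ⟨hy₇, hy₇'⟩, ⟨hy₈, hy₈'⟩, ⟨hz₁, hz₁'⟩, ⟨hz₂, hz₂'⟩, ⟨hz₃, hz₃'⟩, ⟨hz₄, hz₄'⟩,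
    ⟨hz₅, hz₅'⟩, ⟨hz₆, hz₆'⟩, ⟨hz₇, hz₇'⟩, ⟨hz₈, hz₈'⟩,
    e1, e2, e3, e4, e5, e6, e7, e8, e9, e10, e11, e12⟩
  -- y₁y₂ = z₁z₂ from e7 and e1
  have hP : (0 : ℝ) < y₄ * y₅ * y₆ * y₈ := by positivity
  have hA : y₁ * y₂ = z₁ * z₂ :=
    mul_right_cancel₀ hP.ne'
      (by linear_combination e7 - (z₁ * z₂) * e1)
  -- y₃ = z₃ from e12 and e7
  have hQ : (0 : ℝ) < y₁ * y₂ * y₄ * y₅ * y₆ * y₈ := by positivity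
  have h3 : y₃ = z₃ :=
    mul_right_cancel₀ hQ.ne'
      (by linear_combination e12 - z₃ * e7)
  -- y₂y₄ = z₂z₅ and y₂y₅ = z₂z₄ from e9, e10 and e8
  have hR : (0 : ℝ) < y₁ * y₃ * y₆ * y₈ := by positivity
  have h24 : y₂ * y₄ = z₂ * z₅ :=
    mul_right_cancel₀ hR.ne'
      (by linear_combination e9 - (z₂ * z₅) * e8)
  have h25 : y₂ * y₅ = z₂ * z₄ :=
    mul_right_cancel₀ hR.ne'
      (by linear_combination e10 - (z₂ * z₄) * e8)
  -- y₁y₈ = z₁z₆ and y₁y₆ = z₁z₈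
  have hS : (0 : ℝ) < y₂ * y₄ := by positivity
  have h18 : y₁ * y₈ = z₁ * z₆ :=
    mul_right_cancel₀ hS.ne'
      (by linear_combination e5 - (z₁ * z₆) * h24)
  have hT : (0 : ℝ) < y₂ * y₅ := by positivity
  have h16 : y₁ * y₆ = z₁ * z₈ :=
    mul_right_cancel₀ hT.ne'
      (by linear_combination e6 - (z₁ * z₈) * h25)
  -- y₁y₆y₈ = z₁z₆z₈ from e8 and h3
  have h168 : y₁ * y₆ * y₈ = z₁ * z₆ * z₈ := by
    have hy3pos : y₃ ≠ 0 := ne_of_gt hy₃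
    apply mul_left_cancel₀ hy3pos
    linear_combination e8 - (z₁ * z₆ * z₈) * h3
  -- y₁ = z₁
  have hU : (0 : ℝ) < y₁ * y₆ * y₈ := by positivity
  have h1 : y₁ = z₁ :=
    mul_right_cancel₀ hU.ne'
      (by linear_combination (y₁ * y₆) * h18 + (z₁ * z₆) * h16 - z₁ * h168)
  -- y₈ = z₆, y₆ = z₈
  have h8 : y₈ = z₆ := by
    apply mul_left_cancel₀ (ne_of_gt hy₁)
    linear_combination h18 - z₆ * h1
  have h6 : y₆ = z₈ := by
    apply mul_left_cancel₀ (ne_of_gt hy₁)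
    linear_combination h16 - z₈ * h1
  -- plug into equation (3): y₈ y₇ (1 - y₆) = 1 - y₆
  rw [← h6, ← h8, ← h3] at e3
  have key : y₈ * y₇ * (1 - y₆) = 1 - y₆ := by
    linear_combination e3 - (y₃ * y₈ * y₆) * h25
  have hlt : y₈ * y₇ < 1 := lt_trans (mul_lt_of_lt_one_left hy₇ hy₈') hy₇'
  have hpos := mul_pos (sub_pos.mpr hlt) (sub_pos.mpr hy₆')
  have hexp : (1 - y₈ * y₇) * (1 - y₆) = (1 - y₆) - y₈ * y₇ * (1 - y₆) := by ring
  linarith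
end

section
/- Fix x_1, x_2, x_3 ∈ (0,1). Then there exists ε_0 > 0 such that for all x_4 ∈ (1−ε_0, 1), setting r_{0101} = 1 − x_4(1 − x_2 x_3), r_{1001} = x_1 x_2 x_4 and r_{1100} = x_1 x_3 x_4, the strict inequalities r_{0101} r_{1001} < r_{1100}, r_{0101} r_{1100} < r_{1001}, and r_{1001} r_{1100} < r_{0101} all hold. (From the proof of Theorem 13: for sufficiently small convergence parameters, the model N_{4,2} with sister convergence group {{a},{b,c}} satisfies the same semialgebraic constraints as the tree N_{4,1}, hence is not distinguishable from it.) -/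
/-- For sufficiently small convergence parameters, the model `N₄,₂` with sister
convergence group `{{a},{b,c}}` satisfies the same semialgebraic constraints as
the tree `N₄,₁`, hence is not distinguishable from it. -/
theorem n42_satisfies_tree_constraints (x₁ x₂ x₃ : ℝ)
    (hx₁ : x₁ ∈ Set.Ioo (0 : ℝ) 1) (hx₂ : x₂ ∈ Set.Ioo (0 : ℝ) 1)
    (hx₃ : x₃ ∈ Set.Ioo (0 : ℝ) 1) :
    ∃ ε₀ > (0 : ℝ), ∀ x₄ ∈ Set.Ioo (1 - ε₀) (1 : ℝ),
      (1 - x₄ * (1 - x₂ * x₃)) * (x₁ * x₂ * x₄) < x₁ * x₃ * x₄ ∧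
      (1 - x₄ * (1 - x₂ * x₃)) * (x₁ * x₃ * x₄) < x₁ * x₂ * x₄ ∧
      (x₁ * x₂ * x₄) * (x₁ * x₃ * x₄) < 1 - x₄ * (1 - x₂ * x₃) := by
  obtain ⟨h1a, h1b⟩ := hx₁
  obtain ⟨h2a, h2b⟩ := hx₂
  obtain ⟨h3a, h3b⟩ := hx₃
  have c1 : ContinuousAt (fun t : ℝ => (1 - t * (1 - x₂ * x₃)) * (x₁ * x₂ * t)) 1 := by fun_prop
  have c2 : ContinuousAt (fun t : ℝ => x₁ * x₃ * t) 1 := by fun_prop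
  have c3 : ContinuousAt (fun t : ℝ => (1 - t * (1 - x₂ * x₃)) * (x₁ * x₃ * t)) 1 := by fun_prop
  have c4 : ContinuousAt (fun t : ℝ => x₁ * x₂ * t) 1 := by fun_prop
  have c5 : ContinuousAt (fun t : ℝ => (x₁ * x₂ * t) * (x₁ * x₃ * t)) 1 := by fun_prop
  have c6 : ContinuousAt (fun t : ℝ => 1 - t * (1 - x₂ * x₃)) 1 := by fun_prop
  have k1 : 0 < x₁ * x₃ * (1 - x₂ ^ 2) := mul_pos (mul_pos h1a h3a) (by nlinarith)
  have k2 : 0 < x₁ * x₂ * (1 - x₃ ^ 2) := mul_pos (mul_pos h1a h2a) (by nlinarith)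
  have k3 : 0 < x₂ * x₃ * (1 - x₁ ^ 2) := mul_pos (mul_pos h2a h3a) (by nlinarith)
  have e1 := c1.eventually_lt c2 (by simp; nlinarith [k1])
  have e2 := c3.eventually_lt c4 (by simp; nlinarith [k2])
  have e3 := c5.eventually_lt c6 (by simp; nlinarith [k3])
  have e := (e1.and e2).and e3
  rw [Metric.eventually_nhds_iff] at e
  obtain ⟨ε, hε, h⟩ := e
  refine ⟨ε, hε, fun t ht => ?_⟩
  have := h (y := t) (by
    rw [Real.dist_eq, abs_lt]; constructor <;> [linarith [ht.1]; linarith [ht.2]])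
  exact ⟨this.1.1, this.1.2, this.2⟩
end

section
/- For all x_1, x_2, x_3, x_4, x_5 ∈ (0,1), with r_{0011} = x_4x_5, r_{0101} = x_2x_3x_4, r_{0110} = x_2x_3x_5, r_{1001} = x_1x_2x_4, r_{1010} = x_1x_2x_5, r_{1100} = x_1x_3 and r_{1111} = x_1x_3x_4x_5, the following hold: the equalities r_{0101} r_{1010} = r_{0110} r_{1001} and r_{0011} r_{1100} = r_{1111}; the recovery formulas x_1 = √(r_{1001} r_{1100}/r_{0101}), x_2 = √(r_{0110} r_{1001}/(r_{0011} r_{1100})), x_3 = √(r_{0101} r_{1100}/r_{1001}), x_4 = √(r_{0011} r_{0101}/r_{0110}), x_5 = √(r_{0011} r_{0110}/r_{0101}); and the strict inequalities r_{0011} r_{0101} < r_{0110}, r_{0011} r_{0110} < r_{0101}, r_{0101} r_{1100} < r_{1001}, r_{0110} r_{1001} < r_{0011} r_{1100}, and r_{1001} r_{1100} < r_{0101}. (From the proof of Theorem 13: constraints and parameter recovery for the 5-parameter 4-taxon tree N_{4,3}.) -/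
/-- Constraints and parameter recovery for the 5-parameter 4-taxon tree `N₄,₃`
(tree `(o,(a,(b,c)))` under the 2-state symmetric model). -/
theorem n43_constraints_and_recovery (x₁ x₂ x₃ x₄ x₅ : ℝ)
    (hx₁ : x₁ ∈ Set.Ioo (0 : ℝ) 1) (hx₂ : x₂ ∈ Set.Ioo (0 : ℝ) 1)
    (hx₃ : x₃ ∈ Set.Ioo (0 : ℝ) 1) (hx₄ : x₄ ∈ Set.Ioo (0 : ℝ) 1)
    (hx₅ : x₅ ∈ Set.Ioo (0 : ℝ) 1)
    (r0011 r0101 r0110 r1001 r1010 r1100 r1111 : ℝ)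
    (h0011 : r0011 = x₄ * x₅) (h0101 : r0101 = x₂ * x₃ * x₄)
    (h0110 : r0110 = x₂ * x₃ * x₅) (h1001 : r1001 = x₁ * x₂ * x₄)
    (h1010 : r1010 = x₁ * x₂ * x₅) (h1100 : r1100 = x₁ * x₃)
    (h1111 : r1111 = x₁ * x₃ * x₄ * x₅) :
    r0101 * r1010 = r0110 * r1001 ∧
    r0011 * r1100 = r1111 ∧
    x₁ = Real.sqrt (r1001 * r1100 / r0101) ∧
    x₂ = Real.sqrt (r0110 * r1001 / (r0011 * r1100)) ∧
    x₃ = Real.sqrt (r0101 * r1100 / r1001) ∧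
    x₄ = Real.sqrt (r0011 * r0101 / r0110) ∧
    x₅ = Real.sqrt (r0011 * r0110 / r0101) ∧
    r0011 * r0101 < r0110 ∧
    r0011 * r0110 < r0101 ∧
    r0101 * r1100 < r1001 ∧
    r0110 * r1001 < r0011 * r1100 ∧
    r1001 * r1100 < r0101 := by

  obtain ⟨h1,h1'⟩ := hx₁
  obtain ⟨h2,h2'⟩ := hx₂
  obtain ⟨h3,h3'⟩ := hx₃
  obtain ⟨h4,h4'⟩ := hx₄
  obtain ⟨h5,h5'⟩ := hx₅
  subst h0011 h0101 h0110 h1001 h1010 h1100 h1111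
  refine ⟨by ring, by ring, ?_, ?_, ?_, ?_, ?_, ?_, ?_, ?_, ?_, ?_⟩
  · rw [show x₁ * x₂ * x₄ * (x₁ * x₃) / (x₂ * x₃ * x₄) = x₁ ^ 2 by
      field_simp, Real.sqrt_sq h1.le]
  · rw [show x₂ * x₃ * x₅ * (x₁ * x₂ * x₄) / (x₄ * x₅ * (x₁ * x₃)) = x₂ ^ 2 by
      field_simp, Real.sqrt_sq h2.le]
  · rw [show x₂ * x₃ * x₄ * (x₁ * x₃) / (x₁ * x₂ * x₄) = x₃ ^ 2 by
      field_simp, Real.sqrt_sq h3.le]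
  · rw [show x₄ * x₅ * (x₂ * x₃ * x₄) / (x₂ * x₃ * x₅) = x₄ ^ 2 by
      field_simp, Real.sqrt_sq h4.le]
  · rw [show x₄ * x₅ * (x₂ * x₃ * x₅) / (x₂ * x₃ * x₄) = x₅ ^ 2 by
      field_simp, Real.sqrt_sq h5.le]
  · calc x₄ * x₅ * (x₂ * x₃ * x₄) = (x₂ * x₃ * x₅) * (x₄ * x₄) := by ring
      _ < (x₂ * x₃ * x₅) * 1 := by
          apply mul_lt_mul_of_pos_left (by nlinarith) (by positivity)
      _ = x₂ * x₃ * x₅ := by ring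
  · calc x₄ * x₅ * (x₂ * x₃ * x₅) = (x₂ * x₃ * x₄) * (x₅ * x₅) := by ring
      _ < (x₂ * x₃ * x₄) * 1 := by
          apply mul_lt_mul_of_pos_left (by nlinarith) (by positivity)
      _ = x₂ * x₃ * x₄ := by ring
  · calc x₂ * x₃ * x₄ * (x₁ * x₃) = (x₁ * x₂ * x₄) * (x₃ * x₃) := by ring
      _ < (x₁ * x₂ * x₄) * 1 := by
          apply mul_lt_mul_of_pos_left (by nlinarith) (by positivity)
      _ = x₁ * x₂ * x₄ := by ring
  · calc x₂ * x₃ * x₅ * (x₁ * x₂ * x₄) = (x₄ * x₅ * (x₁ * x₃)) * (x₂ * x₂) := by ring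
      _ < (x₄ * x₅ * (x₁ * x₃)) * 1 := by
          apply mul_lt_mul_of_pos_left (by nlinarith) (by positivity)
      _ = x₄ * x₅ * (x₁ * x₃) := by ring
  · calc x₁ * x₂ * x₄ * (x₁ * x₃) = (x₂ * x₃ * x₄) * (x₁ * x₁) := by ring
      _ < (x₂ * x₃ * x₄) * 1 := by
          apply mul_lt_mul_of_pos_left (by nlinarith) (by positivity)
      _ = x₂ * x₃ * x₄ := by ring
end

section
/- Fix x_1, x_2, x_3, x_4, x_5 ∈ (0,1). For every x_6 ∈ (0,1), setting r_{0011} = 1 − x_6(1 − x_4x_5), r_{0101} = x_2x_3x_4x_6, r_{0110} = x_2x_3x_5x_6, r_{1001} = x_1x_2x_4x_6, r_{1010} = x_1x_2x_5x_6, r_{1100} = x_1x_3 and r_{1111} = x_1x_3(1 − x_6(1 − x_4x_5)), the equalities r_{0101} r_{1010} = r_{0110} r_{1001} and r_{0011} r_{1100} = r_{1111} hold; moreover there exists ε_0 > 0 such that for all x_6 ∈ (1−ε_0, 1) the strict inequalities r_{0011} r_{0101} < r_{0110}, r_{0011} r_{0110} < r_{0101}, r_{0101} r_{1100} < r_{1001},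 r_{0110} r_{1001} < r_{0011} r_{1100}, and r_{1001} r_{1100} < r_{0101} all hold. (From the proof of Theorem 13: for sufficiently small convergence parameters, the model N_{4,4} with sister convergence group {{b},{c}} satisfies the same semialgebraic constraints as the tree N_{4,3}, hence is not distinguishable from it.) -/
/-- A continuous function positive at 1 is positive on a left neighborhood of 1. -/
lemma pos_near_one (f : ℝ → ℝ) (hf : Continuous f) (h : 0 < f 1) :
    ∃ ε > (0 : ℝ), ∀ x ∈ Set.Ioo (1 - ε) (1 : ℝ), 0 < f x := by
  have hc : Set.Ioi (0 : ℝ) ∈ nhds (f 1) := Ioi_mem_nhds h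
  have hp : f ⁻¹' Set.Ioi 0 ∈ nhds (1 : ℝ) := hf.continuousAt hc
  rcases Metric.mem_nhds_iff.1 hp with ⟨δ, hδ, hball⟩
  refine ⟨δ, hδ, fun x hx => ?_⟩
  have : x ∈ Metric.ball (1 : ℝ) δ := by
    rw [Metric.mem_ball, Real.dist_eq, abs_lt]
    constructor <;> linarith [hx.1, hx.2]
  exact hball this

/-- For sufficiently small convergence parameters, the model `N₄,₄` with sister
convergence group `{{b},{c}}` in the tip epoch satisfies the same semialgebraic
constraints as the tree `N₄,₃`, hence is not distinguishable from it. -/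
theorem n44_satisfies_tree_constraints (x₁ x₂ x₃ x₄ x₅ : ℝ)
    (hx₁ : x₁ ∈ Set.Ioo (0 : ℝ) 1) (hx₂ : x₂ ∈ Set.Ioo (0 : ℝ) 1)
    (hx₃ : x₃ ∈ Set.Ioo (0 : ℝ) 1) (hx₄ : x₄ ∈ Set.Ioo (0 : ℝ) 1)
    (hx₅ : x₅ ∈ Set.Ioo (0 : ℝ) 1) :
    (∀ x₆ ∈ Set.Ioo (0 : ℝ) 1,
      (x₂ * x₃ * x₄ * x₆) * (x₁ * x₂ * x₅ * x₆) =
        (x₂ * x₃ * x₅ * x₆) * (x₁ * x₂ * x₄ * x₆) ∧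
      (1 - x₆ * (1 - x₄ * x₅)) * (x₁ * x₃) = x₁ * x₃ * (1 - x₆ * (1 - x₄ * x₅))) ∧
    ∃ ε₀ > (0 : ℝ), ∀ x₆ ∈ Set.Ioo (1 - ε₀) (1 : ℝ),
      (1 - x₆ * (1 - x₄ * x₅)) * (x₂ * x₃ * x₄ * x₆) < x₂ * x₃ * x₅ * x₆ ∧
      (1 - x₆ * (1 - x₄ * x₅)) * (x₂ * x₃ * x₅ * x₆) < x₂ * x₃ * x₄ * x₆ ∧
      (x₂ * x₃ * x₄ * x₆) * (x₁ * x₃) < x₁ * x₂ * x₄ * x₆ ∧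
      (x₂ * x₃ * x₅ * x₆) * (x₁ * x₂ * x₄ * x₆) <
        (1 - x₆ * (1 - x₄ * x₅)) * (x₁ * x₃) ∧
      (x₁ * x₂ * x₄ * x₆) * (x₁ * x₃) < x₂ * x₃ * x₄ * x₆ := by
  obtain ⟨h10, h11⟩ := hx₁
  obtain ⟨h20, h21⟩ := hx₂
  obtain ⟨h30, h31⟩ := hx₃
  obtain ⟨h40, h41⟩ := hx₄
  obtain ⟨h50, h51⟩ := hx₅
  refine ⟨fun x₆ _ => ⟨by ring, by ring⟩, ?_⟩
  have c1 : Continuous fun t : ℝ =>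
      x₂ * x₃ * x₅ * t - (1 - t * (1 - x₄ * x₅)) * (x₂ * x₃ * x₄ * t) := by
    continuity
  have c2 : Continuous fun t : ℝ =>
      x₂ * x₃ * x₄ * t - (1 - t * (1 - x₄ * x₅)) * (x₂ * x₃ * x₅ * t) := by
    continuity
  have c3 : Continuous fun t : ℝ =>
      x₁ * x₂ * x₄ * t - (x₂ * x₃ * x₄ * t) * (x₁ * x₃) := by continuity
  have c4 : Continuous fun t : ℝ =>
      (1 - t * (1 - x₄ * x₅)) * (x₁ * x₃) - (x₂ * x₃ * x₅ * t) * (x₁ * x₂ * x₄ * t) := by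
    continuity
  have c5 : Continuous fun t : ℝ =>
      x₂ * x₃ * x₄ * t - (x₁ * x₂ * x₄ * t) * (x₁ * x₃) := by continuity
  obtain ⟨ε₁, hε₁, H1⟩ := pos_near_one _ c1 (by show (0:ℝ) < _; nlinarith [mul_pos (mul_pos (mul_pos h20 h30) h50) (show (0:ℝ) < 1 - x₄*x₄ by nlinarith)])
  obtain ⟨ε₂, hε₂, H2⟩ := pos_near_one _ c2 (by show (0:ℝ) < _; nlinarith [mul_pos (mul_pos (mul_pos h20 h30) h40) (show (0:ℝ) < 1 - x₅*x₅ by nlinarith)])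
  obtain ⟨ε₃, hε₃, H3⟩ := pos_near_one _ c3 (by show (0:ℝ) < _; nlinarith [mul_pos (mul_pos (mul_pos h10 h20) h40) (show (0:ℝ) < 1 - x₃*x₃ by nlinarith)])
  obtain ⟨ε₄, hε₄, H4⟩ := pos_near_one _ c4 (by show (0:ℝ) < _; nlinarith [mul_pos (mul_pos (mul_pos (mul_pos h10 h30) h40) h50) (show (0:ℝ) < 1 - x₂*x₂ by nlinarith)])
  obtain ⟨ε₅, hε₅, H5⟩ := pos_near_one _ c5 (by show (0:ℝ) < _; nlinarith [mul_pos (mul_pos (mul_pos h20 h30) h40) (show (0:ℝ) < 1 - x₁*x₁ by nlinarith)])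
  refine ⟨min ε₁ (min ε₂ (min ε₃ (min ε₄ ε₅))), by positivity, fun t ht => ?_⟩
  have hlt := ht.1
  have m1 : min ε₁ (min ε₂ (min ε₃ (min ε₄ ε₅))) ≤ ε₁ := min_le_left _ _
  have m2 : min ε₁ (min ε₂ (min ε₃ (min ε₄ ε₅))) ≤ ε₂ :=
    le_trans (min_le_right _ _) (min_le_left _ _)
  have m3 : min ε₁ (min ε₂ (min ε₃ (min ε₄ ε₅))) ≤ ε₃ :=
    le_trans (min_le_right _ _) (le_trans (min_le_right _ _) (min_le_left _ _))
  have m4 : min ε₁ (min ε₂ (min ε₃ (min ε₄ ε₅))) ≤ ε₄ :=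
    le_trans (min_le_right _ _) (le_trans (min_le_right _ _)
      (le_trans (min_le_right _ _) (min_le_left _ _)))
  have m5 : min ε₁ (min ε₂ (min ε₃ (min ε₄ ε₅))) ≤ ε₅ :=
    le_trans (min_le_right _ _) (le_trans (min_le_right _ _)
      (le_trans (min_le_right _ _) (min_le_right _ _)))
  have ht1 : t ∈ Set.Ioo (1 - ε₁) 1 := ⟨by linarith, ht.2⟩
  have ht2 : t ∈ Set.Ioo (1 - ε₂) 1 := ⟨by linarith, ht.2⟩
  have ht3 : t ∈ Set.Ioo (1 - ε₃) 1 := ⟨by linarith, ht.2⟩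
  have ht4 : t ∈ Set.Ioo (1 - ε₄) 1 := ⟨by linarith, ht.2⟩
  have ht5 : t ∈ Set.Ioo (1 - ε₅) 1 := ⟨by linarith, ht.2⟩
  have g1 := H1 t ht1
  have g2 := H2 t ht2
  have g3 := H3 t ht3
  have g4 := H4 t ht4
  have g5 := H5 t ht5
  exact ⟨by linarith, by linarith, by linarith, by linarith, by linarith⟩
end

section
/- For all x_1, …, x_8 ∈ (0,1), with r_{0011} = x_4x_5x_6x_7, r_{0101} = x_2x_3x_4x_6x_8, r_{0110} = x_7x_8(1 − x_6(1 − x_2x_3x_5)), r_{1001} = x_1x_2x_4, r_{1010} = x_1x_2x_5x_6x_7 and r_{1100} = x_1x_3x_6x_8, the strict inequalities r_{0101} r_{1010} < r_{0011} r_{1100} and r_{0101} r_{1010} < r_{0110} r_{1001} hold; that is, min(r_{0011} r_{1100}, r_{0101} r_{1010}, r_{0110} r_{1001}) = r_{0101} r_{1010}. (From the proof of Theorem 5: the constraint that separates the leaf-labeling classes of CDM 3.) -/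
/-- The constraint that separates the leaf-labeling classes of CDM 3:
`r₀₁₀₁ r₁₀₁₀` is the strict minimum of the three products. -/
theorem cdm3_leaf_labeling_constraint (x₁ x₂ x₃ x₄ x₅ x₆ x₇ x₈ : ℝ)
    (hx₁ : x₁ ∈ Set.Ioo (0 : ℝ) 1) (hx₂ : x₂ ∈ Set.Ioo (0 : ℝ) 1)
    (hx₃ : x₃ ∈ Set.Ioo (0 : ℝ) 1) (hx₄ : x₄ ∈ Set.Ioo (0 : ℝ) 1)
    (hx₅ : x₅ ∈ Set.Ioo (0 : ℝ) 1) (hx₆ : x₆ ∈ Set.Ioo (0 : ℝ) 1)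
    (hx₇ : x₇ ∈ Set.Ioo (0 : ℝ) 1) (hx₈ : x₈ ∈ Set.Ioo (0 : ℝ) 1)
    (r0011 r0101 r0110 r1001 r1010 r1100 : ℝ)
    (h0011 : r0011 = x₄ * x₅ * x₆ * x₇)
    (h0101 : r0101 = x₂ * x₃ * x₄ * x₆ * x₈)
    (h0110 : r0110 = x₇ * x₈ * (1 - x₆ * (1 - x₂ * x₃ * x₅)))
    (h1001 : r1001 = x₁ * x₂ * x₄)
    (h1010 : r1010 = x₁ * x₂ * x₅ * x₆ * x₇)
    (h1100 : r1100 = x₁ * x₃ * x₆ * x₈) :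
    r0101 * r1010 < r0011 * r1100 ∧
    r0101 * r1010 < r0110 * r1001 ∧
    min (r0011 * r1100) (min (r0101 * r1010) (r0110 * r1001)) = r0101 * r1010 := by
  obtain ⟨h1, h1'⟩ := hx₁
  obtain ⟨h2, h2'⟩ := hx₂
  obtain ⟨h3, h3'⟩ := hx₃
  obtain ⟨h4, h4'⟩ := hx₄
  obtain ⟨h5, h5'⟩ := hx₅
  obtain ⟨h6, h6'⟩ := hx₆
  obtain ⟨h7, h7'⟩ := hx₇
  obtain ⟨h8, h8'⟩ := hx₈
  subst h0011 h0101 h0110 h1001 h1010 h1100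
  have key1 : x₂ * x₃ * x₄ * x₆ * x₈ * (x₁ * x₂ * x₅ * x₆ * x₇) <
      x₄ * x₅ * x₆ * x₇ * (x₁ * x₃ * x₆ * x₈) := by
    have hB : 0 < x₁ * x₃ * x₄ * x₅ * (x₆ * x₆) * x₇ * x₈ := by positivity
    nlinarith [mul_pos hB (show (0:ℝ) < 1 - x₂ * x₂ by nlinarith)]
  have key2 : x₂ * x₃ * x₄ * x₆ * x₈ * (x₁ * x₂ * x₅ * x₆ * x₇) <
      x₇ * x₈ * (1 - x₆ * (1 - x₂ * x₃ * x₅)) * (x₁ * x₂ * x₄) := by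
    have hC : 0 < x₁ * x₂ * x₄ * x₇ * x₈ * ((1 - x₆) * (1 + x₂ * x₃ * x₅ * x₆)) := by
      have : 0 < 1 - x₆ := by linarith
      have : 0 < 1 + x₂ * x₃ * x₅ * x₆ := by positivity
      positivity
    nlinarith [hC]
  refine ⟨key1, key2, ?_⟩
  rw [min_eq_left (le_of_lt key2), min_eq_right (le_of_lt key1)]
end

section
/- Define F : ℝ^5 → ℝ^{12} by F(x_1,…,x_5) = (x_4x_5, x_2x_3x_4, x_2x_3x_5, x_2x_3x_4x_5, x_1x_2x_4, x_1x_2x_5, x_1x_2x_4x_5, x_1x_3, x_1x_2x_3x_4, x_1x_2x_3x_5, x_1x_3x_4x_5, x_1x_2x_3x_4x_5), and define G : ℝ^6 → ℝ^{12} by G(x'_1,…,x'_6) = (1−x'_6(1−x'_2x'_3x'_5), x'_4x'_5x'_6, x'_2x'_3x'_4x'_6, x'_2x'_3x'_4x'_5x'_6, x'_1x'_2x'_5x'_6, x'_1x'_3x'_6, x'_1x'_2x'_3x'_5x'_6, x'_1x'_2x'_4, x'_1x'_2x'_4x'_5x'_6, x'_1x'_2x'_3x'_4x'_6, x'_1x'_4(x'_2(1−x'_6)+x'_3x'_5x'_6),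 x'_1x'_2x'_3x'_4x'_5x'_6). Then F(x) tends to (1,0,0,0,0,0,0,0,0,0,0,0) as (x_1,x_2,x_3,x_4,x_5) → (0,0,0,1,1), and for any fixed x'_2, x'_3, x'_5 ∈ (0,1), G(x') tends to (1,0,0,0,0,0,0,0,0,0,0,0) as (x'_1,x'_4,x'_6) → (0,0,0). (Proposition 8: the sets of possible phylogenetic tensors of the tree (o,(a,(b,c))) and of the non-tree CDMs with non-sister convergence group {{b},{c}} converge to the same set in these limits.) -/
private lemma tendsto_vecCons {α : Type*} {n : ℕ} {l : Filter α}
    {f : α → ℝ} {g : α → Fin n → ℝ} {b : ℝ} {v : Fin n → ℝ}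
    (hf : Filter.Tendsto f l (nhds b)) (hg : Filter.Tendsto g l (nhds v)) :
    Filter.Tendsto (fun a => Matrix.vecCons (f a) (g a)) l (nhds (Matrix.vecCons b v)) := by
  rw [tendsto_pi_nhds] at hg ⊢
  intro i
  refine Fin.cases ?_ ?_ i
  · simpa using hf
  · intro j; simpa using hg j

/-- Proposition 8: the transformed phylogenetic tensor of the 4-taxon tree CDM 1 with
leaf labeling `(o,(a,(b,c)))` tends to `(1,0,…,0)` as `(x₁,x₂,x₃,x₄,x₅) → (0,0,0,1,1)`,
and the tensor of the non-tree CDM with non-sister convergence group `{{b},{c}}` in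
the tip epoch tends to the same point as `(x'₁,x'₄,x'₆) → (0,0,0)` for any fixed
`x'₂, x'₃, x'₅ ∈ (0,1)`: the sets of possible phylogenetic tensors converge to the
same set in these limits. -/
theorem tree_and_convergence_cdm_same_limit :
    Filter.Tendsto
      (fun x : ℝ × ℝ × ℝ × ℝ × ℝ =>
        match x with
        | (x₁, x₂, x₃, x₄, x₅) =>
          (![x₄ * x₅, x₂ * x₃ * x₄, x₂ * x₃ * x₅, x₂ * x₃ * x₄ * x₅,
             x₁ * x₂ * x₄, x₁ * x₂ * x₅, x₁ * x₂ * x₄ * x₅, x₁ * x₃,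
             x₁ * x₂ * x₃ * x₄, x₁ * x₂ * x₃ * x₅, x₁ * x₃ * x₄ * x₅,
             x₁ * x₂ * x₃ * x₄ * x₅] : Fin 12 → ℝ))
      (nhds ((0 : ℝ), (0 : ℝ), (0 : ℝ), (1 : ℝ), (1 : ℝ)))
      (nhds ![1, 0, 0, 0, 0, 0, 0, 0, 0, 0, 0, 0]) ∧
    ∀ x₂' x₃' x₅' : ℝ, x₂' ∈ Set.Ioo (0 : ℝ) 1 → x₃' ∈ Set.Ioo (0 : ℝ) 1 →
      x₅' ∈ Set.Ioo (0 : ℝ) 1 →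
      Filter.Tendsto
        (fun w : ℝ × ℝ × ℝ =>
          match w with
          | (x₁', x₄', x₆') =>
            (![1 - x₆' * (1 - x₂' * x₃' * x₅'), x₄' * x₅' * x₆',
               x₂' * x₃' * x₄' * x₆', x₂' * x₃' * x₄' * x₅' * x₆',
               x₁' * x₂' * x₅' * x₆', x₁' * x₃' * x₆',
               x₁' * x₂' * x₃' * x₅' * x₆', x₁' * x₂' * x₄',
               x₁' * x₂' * x₄' * x₅' * x₆', x₁' * x₂' * x₃' * x₄' * x₆',
               x₁' * x₄' * (x₂' * (1 - x₆') + x₃' * x₅' * x₆'),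
               x₁' * x₂' * x₃' * x₄' * x₅' * x₆'] : Fin 12 → ℝ))
        (nhds ((0 : ℝ), (0 : ℝ), (0 : ℝ)))
        (nhds ![1, 0, 0, 0, 0, 0, 0, 0, 0, 0, 0, 0]) := by
  constructor
  · set p : ℝ × ℝ × ℝ × ℝ × ℝ := ((0 : ℝ), (0 : ℝ), (0 : ℝ), (1 : ℝ), (1 : ℝ)) with hp
    have h₁ : Filter.Tendsto (fun x : ℝ × ℝ × ℝ × ℝ × ℝ => x.1) (nhds p) (nhds 0) :=
      Continuous.tendsto (by fun_prop) p
    have h₂ : Filter.Tendsto (fun x : ℝ × ℝ × ℝ × ℝ × ℝ => x.2.1) (nhds p) (nhds 0) :=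
      Continuous.tendsto (by fun_prop) p
    have h₃ : Filter.Tendsto (fun x : ℝ × ℝ × ℝ × ℝ × ℝ => x.2.2.1) (nhds p) (nhds 0) :=
      Continuous.tendsto (by fun_prop) p
    have h₄ : Filter.Tendsto (fun x : ℝ × ℝ × ℝ × ℝ × ℝ => x.2.2.2.1) (nhds p) (nhds 1) :=
      Continuous.tendsto (by fun_prop) p
    have h₅ : Filter.Tendsto (fun x : ℝ × ℝ × ℝ × ℝ × ℝ => x.2.2.2.2) (nhds p) (nhds 1) :=
      Continuous.tendsto (by fun_prop) p
    refine tendsto_vecCons (by simpa using h₄.mul h₅) ?_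
    refine tendsto_vecCons (by simpa using (h₂.mul h₃).mul h₄) ?_
    refine tendsto_vecCons (by simpa using (h₂.mul h₃).mul h₅) ?_
    refine tendsto_vecCons (by simpa using ((h₂.mul h₃).mul h₄).mul h₅) ?_
    refine tendsto_vecCons (by simpa using (h₁.mul h₂).mul h₄) ?_
    refine tendsto_vecCons (by simpa using (h₁.mul h₂).mul h₅) ?_
    refine tendsto_vecCons (by simpa using ((h₁.mul h₂).mul h₄).mul h₅) ?_
    refine tendsto_vecCons (by simpa using h₁.mul h₃) ?_
    refine tendsto_vecCons (by simpa using ((h₁.mul h₂).mul h₃).mul h₄) ?_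
    refine tendsto_vecCons (by simpa using ((h₁.mul h₂).mul h₃).mul h₅) ?_
    refine tendsto_vecCons (by simpa using ((h₁.mul h₃).mul h₄).mul h₅) ?_
    refine tendsto_vecCons (by simpa using (((h₁.mul h₂).mul h₃).mul h₄).mul h₅) ?_
    exact tendsto_const_nhds
  · intro a b c _ _ _
    set q : ℝ × ℝ × ℝ := ((0 : ℝ), (0 : ℝ), (0 : ℝ)) with hq
    have h₁ : Filter.Tendsto (fun w : ℝ × ℝ × ℝ => w.1) (nhds q) (nhds 0) :=
      Continuous.tendsto (by fun_prop) q
    have h₄ : Filter.Tendsto (fun w : ℝ × ℝ × ℝ => w.2.1) (nhds q) (nhds 0) :=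
      Continuous.tendsto (by fun_prop) q
    have h₆ : Filter.Tendsto (fun w : ℝ × ℝ × ℝ => w.2.2) (nhds q) (nhds 0) :=
      Continuous.tendsto (by fun_prop) q
    have ha : Filter.Tendsto (fun _ : ℝ × ℝ × ℝ => a) (nhds q) (nhds a) := tendsto_const_nhds
    have hb : Filter.Tendsto (fun _ : ℝ × ℝ × ℝ => b) (nhds q) (nhds b) := tendsto_const_nhds
    have hc : Filter.Tendsto (fun _ : ℝ × ℝ × ℝ => c) (nhds q) (nhds c) := tendsto_const_nhds
    have hone : Filter.Tendsto (fun _ : ℝ × ℝ × ℝ => (1:ℝ)) (nhds q) (nhds 1) :=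
      tendsto_const_nhds
    have h00 := hone.sub (h₆.mul (hone.sub ((ha.mul hb).mul hc)))
    refine tendsto_vecCons (by simpa using h00) ?_
    refine tendsto_vecCons (by simpa using (h₄.mul hc).mul h₆) ?_
    refine tendsto_vecCons (by simpa using ((ha.mul hb).mul h₄).mul h₆) ?_
    refine tendsto_vecCons (by simpa using (((ha.mul hb).mul h₄).mul hc).mul h₆) ?_
    refine tendsto_vecCons (by simpa using ((h₁.mul ha).mul hc).mul h₆) ?_
    refine tendsto_vecCons (by simpa using (h₁.mul hb).mul h₆) ?_
    refine tendsto_vecCons (by simpa using (((h₁.mul ha).mul hb).mul hc).mul h₆) ?_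
    refine tendsto_vecCons (by simpa using (h₁.mul ha).mul h₄) ?_
    refine tendsto_vecCons (by simpa using (((h₁.mul ha).mul h₄).mul hc).mul h₆) ?_
    refine tendsto_vecCons (by simpa using (((h₁.mul ha).mul hb).mul h₄).mul h₆) ?_
    have h11 := (h₁.mul h₄).mul ((ha.mul (hone.sub h₆)).add ((hb.mul hc).mul h₆))
    refine tendsto_vecCons (by simpa using h11) ?_
    refine tendsto_vecCons (by simpa using ((((h₁.mul ha).mul hb).mul h₄).mul hc).mul h₆) ?_
    exact tendsto_const_nhds
end
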